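/- arXiv:1801.07616 — 6 statements merged into one kernel-verified Lean document; each statement's English description precedes it below -/
import Mathlib

section
/- Let B(z) = λ (z^n - c^n)/(1 - \bar{c}^n z^n) with |λ| = 1 and c ∈ D, and let φ(z) = e^{iπ/n} z / (1 - \bar{c}^n z^n)^{1/n} (with a holomorphic branch of the n-th root on D equal to 1 at 0). Then for all z ∈ D, B(φ(z)) = λ (|c|^{2n} - 1) z^n - λ c^n. In particular, the polynomial p(z) = λ(|c|^{2n}-1) z^n - λ c^n satisfies B ∘ φ = p on D. -/
open Complex

/-- The open unit disk in the complex plane. -/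
def unitDisk : Set ℂ := {z : ℂ | ‖z‖ < 1}

/-- Let `B(z) = λ (z^n - c^n)/(1 - conj c ^ n * z^n)` with `|λ| = 1` and
`c` in the unit disk, and let `φ(z) = e^{iπ/n} z / ρ(z)` where `ρ` is a holomorphic branch
on the disk of the n-th root of `1 - conj c ^ n * z ^ n` with `ρ(0) = 1`. Then for all `z`
in the disk, `B(φ(z)) = λ (|c|^{2n} - 1) z^n - λ c^n`; i.e. the polynomial
`p(z) = λ(|c|^{2n}-1) z^n - λ c^n` satisfies `B ∘ φ = p` on the disk. -/
theorem stmt2 (n : ℕ) (hn : 2 ≤ n) (lam c : ℂ) (hlam : ‖lam‖ = 1)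
    (hc : c ∈ unitDisk)
    (ρ : ℂ → ℂ) (hρdiff : DifferentiableOn ℂ ρ unitDisk)
    (hρpow : ∀ z ∈ unitDisk, ρ z ^ n = 1 - (starRingEnd ℂ) c ^ n * z ^ n)
    (hρ0 : ρ 0 = 1)
    (B φ p : ℂ → ℂ)
    (hB : ∀ z : ℂ, B z = lam * (z ^ n - c ^ n) / (1 - (starRingEnd ℂ) c ^ n * z ^ n))
    (hφ : ∀ z : ℂ, φ z = Complex.exp (↑Real.pi * Complex.I / n) * z / ρ z)
    (hp : ∀ z : ℂ, p z = lam * (((‖c‖ : ℝ) : ℂ) ^ (2 * n) - 1) * z ^ n - lam * c ^ n) :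
    ∀ z ∈ unitDisk, B (φ z) = p z := by
  intro z hz
  have hz1 : ‖z‖ < 1 := hz
  have hc1 : ‖c‖ < 1 := hc
  have hn0 : (n : ℂ) ≠ 0 := by exact_mod_cast (by omega : n ≠ 0)
  have hd_abs : ‖(starRingEnd ℂ) c ^ n * z ^ n‖ < 1 := by
    rw [norm_mul, norm_pow, norm_pow, Complex.norm_conj]
    have h1 : ‖c‖ ^ n < 1 := pow_lt_one₀ (norm_nonneg c) hc1 (by omega)
    have h2 : ‖z‖ ^ n ≤ 1 := (pow_le_one₀ (norm_nonneg z) hz1.le)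
    nlinarith [pow_nonneg (norm_nonneg c) n, pow_nonneg (norm_nonneg z) n]
  have hd : (1 : ℂ) - (starRingEnd ℂ) c ^ n * z ^ n ≠ 0 := by
    intro h
    have h1 : (starRingEnd ℂ) c ^ n * z ^ n = 1 := by linear_combination -h
    rw [h1] at hd_abs; simp at hd_abs
  have hρz : ρ z ≠ 0 := by
    intro h
    have h1 := hρpow z hz
    rw [h, zero_pow (by omega : n ≠ 0)] at h1
    exact hd h1.symm
  have hexp : Complex.exp (↑Real.pi * Complex.I / n) ^ n = -1 := by
    rw [← Complex.exp_nat_mul, mul_div_cancel₀ _ hn0, Complex.exp_pi_mul_I]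
  have key : φ z ^ n = -(z ^ n) / (1 - (starRingEnd ℂ) c ^ n * z ^ n) := by
    rw [hφ, div_pow, mul_pow, hexp, hρpow z hz, neg_one_mul]
  have habs : (((‖c‖ : ℝ) : ℂ)) ^ (2 * n) = c ^ n * (starRingEnd ℂ) c ^ n := by
    have h1 : (((‖c‖ : ℝ) : ℂ)) ^ 2 = c * (starRingEnd ℂ) c := by
      rw [Complex.mul_conj]
      norm_cast
      rw [Complex.sq_norm]
    rw [pow_mul, h1, mul_pow]
  rw [hB, hp, key, habs]
  have h2 : (1 : ℂ) - (starRingEnd ℂ) c ^ n * (-(z ^ n) / (1 - (starRingEnd ℂ) c ^ n * z ^ n)) ≠ 0 := by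
    have : (1 : ℂ) - (starRingEnd ℂ) c ^ n * (-(z ^ n) / (1 - (starRingEnd ℂ) c ^ n * z ^ n)) = 1 / (1 - (starRingEnd ℂ) c ^ n * z ^ n) := by
      field_simp
      ring
    rw [this]
    exact one_div_ne_zero hd
  rw [div_eq_iff h2]
  have hd' : (1 : ℂ) - z ^ n * (starRingEnd ℂ) c ^ n ≠ 0 := by rw [mul_comm]; exact hd
  field_simp
  ring
end

section
/- Let B be a degree three finite Blaschke product whose two critical points z₁, z₂ in the open unit disk D are distinct. If ψ : D → D is a holomorphic automorphism of D satisfying B ∘ ψ = B on D, then ψ is the identity map. -/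
open Complex Metric Set Polynomial

namespace Complex

noncomputable def abs : AbsoluteValue ℂ ℝ := NormedField.toAbsoluteValue ℂ

theorem abs_apply' (z : ℂ) : Complex.abs z = ‖z‖ := rfl

theorem abs_conj (z : ℂ) : Complex.abs ((starRingEnd ℂ) z) = Complex.abs z := by
  simp [abs_apply']

theorem sq_abs (z : ℂ) : Complex.abs z ^ 2 = normSq z := by
  rw [abs_apply', Complex.sq_norm]

theorem abs_ofReal (r : ℝ) : Complex.abs (r : ℂ) = |r| := by
  simp [abs_apply']

theorem abs_two : Complex.abs 2 = 2 := by
  simp [abs_apply']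

theorem norm_eq_abs (z : ℂ) : ‖z‖ = Complex.abs z := rfl

end Complex

theorem oneSub_ne {a z : ℂ} (ha : Complex.abs a < 1) (hz : Complex.abs z < 1) :
    (1 : ℂ) - (starRingEnd ℂ) a * z ≠ 0 := by
  intro h
  have h1 : Complex.abs ((starRingEnd ℂ) a * z) < 1 := by
    rw [map_mul, Complex.abs_conj]
    nlinarith [Complex.abs.nonneg a, Complex.abs.nonneg z]
  have : (1 : ℂ) = (starRingEnd ℂ) a * z := by linear_combination h
  rw [← this] at h1
  simp at h1

/-- The Möbius involution -/
noncomputable def mo (a z : ℂ) : ℂ := (a - z) / (1 - (starRingEnd ℂ) a * z)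

theorem memball {z : ℂ} : z ∈ ball (0:ℂ) 1 ↔ Complex.abs z < 1 := by
  simp [mem_ball_zero_iff, Complex.abs_apply']

theorem mo_mem {a z : ℂ} (ha : Complex.abs a < 1) (hz : Complex.abs z < 1) :
    Complex.abs (mo a z) < 1 := by
  rw [mo, map_div₀, div_lt_one]
  · have h1 : Complex.normSq (a - z) < Complex.normSq (1 - (starRingEnd ℂ) a * z) := by
      have ha' : Complex.normSq a < 1 := by
        rw [← Complex.sq_abs]; nlinarith [Complex.abs.nonneg a]
      have hz' : Complex.normSq z < 1 := by
        rw [← Complex.sq_abs]; nlinarith [Complex.abs.nonneg z]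
      simp only [Complex.normSq_apply, Complex.sub_re, Complex.sub_im, Complex.one_re,
        Complex.one_im, Complex.mul_re, Complex.mul_im, Complex.conj_re, Complex.conj_im] at *
      nlinarith [mul_pos (sub_pos.2 ha') (sub_pos.2 hz')]
    have h2 := Complex.sq_abs (a - z)
    have h3 := Complex.sq_abs (1 - (starRingEnd ℂ) a * z)
    nlinarith [Complex.abs.nonneg (a - z), Complex.abs.nonneg (1 - (starRingEnd ℂ) a * z)]
  · rw [AbsoluteValue.pos_iff]
    exact oneSub_ne ha hz

theorem mo_mapsTo {a : ℂ} (ha : Complex.abs a < 1) :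
    MapsTo (mo a) (ball 0 1) (ball 0 1) := fun z hz => memball.2 (mo_mem ha (memball.1 hz))

theorem mo_mo {a z : ℂ} (ha : Complex.abs a < 1) (hz : Complex.abs z < 1) :
    mo a (mo a z) = z := by
  have h1 := oneSub_ne ha hz
  have h2 := oneSub_ne ha ha
  have h3 : 1 - (starRingEnd ℂ) a * mo a z = (1 - (starRingEnd ℂ) a * a) / (1 - (starRingEnd ℂ) a * z) := by
    rw [mo]; field_simp; ring
  rw [mo, h3, mo]
  rw [div_div_eq_mul_div, sub_mul, div_mul_cancel₀ _ h1, div_eq_iff h2]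
  ring

theorem mo_self (a : ℂ) : mo a a = 0 := by simp [mo]

theorem mo_zero (a : ℂ) : mo a 0 = a := by simp [mo]

theorem mo_zero' (z : ℂ) : mo 0 z = -z := by simp [mo]

theorem mo_eq_zero {a z : ℂ} (ha : Complex.abs a < 1) (hz : Complex.abs z < 1)
    (h : mo a z = 0) : z = a := by
  rw [mo, _root_.div_eq_zero_iff] at h
  rcases h with h | h
  · exact (sub_eq_zero.1 h).symm
  · exact absurd h (oneSub_ne ha hz)

theorem mo_diffOn {a : ℂ} (ha : Complex.abs a < 1) :
    DifferentiableOn ℂ (mo a) (ball 0 1) := by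
  apply DifferentiableOn.div
  · exact (differentiableOn_const a).sub differentiableOn_id
  · exact (differentiableOn_const 1).sub ((differentiableOn_const _).mul differentiableOn_id)
  · intro z hz
    exact oneSub_ne ha (memball.1 hz)

theorem hasDerivAt_mo (a : ℂ) {z : ℂ} (h : (1:ℂ) - (starRingEnd ℂ) a * z ≠ 0) :
    HasDerivAt (mo a)
      (-((1 - (starRingEnd ℂ) a * a) / (1 - (starRingEnd ℂ) a * z)^2)) z := by
  have h1 : HasDerivAt (fun z : ℂ => a - z) (-1) z := ((hasDerivAt_id z).const_sub a)
  have h2 : HasDerivAt (fun z : ℂ => 1 - (starRingEnd ℂ) a * z) (-((starRingEnd ℂ) a * 1)) z :=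
    (((hasDerivAt_id z).const_mul _).const_sub 1)
  have := h1.div h2 h
  refine this.congr_deriv ?_
  rw [← neg_div]; congr 1
  ring

theorem schwarz_le {f : ℂ → ℂ} (hd : DifferentiableOn ℂ f (ball 0 1))
    (hm : MapsTo f (ball 0 1) (ball 0 1)) (h0 : f 0 = 0) {z : ℂ} (hz : z ∈ ball (0:ℂ) 1) :
    Complex.abs (f z) ≤ Complex.abs z := by
  have hm' : MapsTo f (ball 0 1) (closedBall (f 0) 1) := by
    rw [h0]; exact hm.mono_right ball_subset_closedBall
  have := Complex.dist_le_div_mul_dist_of_mapsTo_ball hd hm' hz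
  simpa [h0, Complex.dist_eq, Complex.abs_apply'] using this

theorem schwarz_eq {f : ℂ → ℂ} (hd : DifferentiableOn ℂ f (ball 0 1))
    (hm : MapsTo f (ball 0 1) (ball 0 1)) (h0 : f 0 = 0) {z₀ : ℂ} (hz₀ : z₀ ∈ ball (0:ℂ) 1)
    (hz₀' : z₀ ≠ 0) (heq : Complex.abs (f z₀) = Complex.abs z₀) :
    ∀ z ∈ ball (0:ℂ) 1, f z = (f z₀ / z₀) * z := by
  have hm' : MapsTo f (ball 0 1) (closedBall (f 0) 1) := by
    rw [h0]; exact hm.mono_right ball_subset_closedBall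
  have hds : dslope f 0 z₀ = f z₀ / z₀ := by
    rw [dslope_of_ne _ hz₀']
    rw [slope_def_field]
    simp [h0]
  have heq' : ‖dslope f 0 z₀‖ = 1 / 1 := by
    rw [hds]
    simp only [norm_div, Complex.norm_eq_abs, heq]
    rw [div_self (Complex.abs.ne_zero hz₀')]
    norm_num
  have := Complex.affine_of_mapsTo_ball_of_exists_norm_dslope_eq_div hd hm' hz₀ heq'
  intro z hz
  have h2 := this hz
  simp only [h0, hds, sub_zero, zero_add, smul_eq_mul] at h2
  rw [h2]; ring

theorem inv_conj_big {x : ℂ} (hx0 : x ≠ 0) (hax : Complex.abs x < 1) :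
    1 < Complex.abs ((starRingEnd ℂ) x)⁻¹ := by
  rw [map_inv₀, Complex.abs_conj]
  have hxpos : 0 < Complex.abs x := Complex.abs.pos hx0
  rw [one_lt_inv_iff₀]
  exact ⟨hxpos, hax⟩

theorem five_roots {N : Polynomial ℂ} (hdeg : N.natDegree ≤ 4)
    {x y e : ℂ} (hx0 : x ≠ 0) (hy0 : y ≠ 0) (hxy : x ≠ y)
    (hax : Complex.abs x < 1) (hay : Complex.abs y < 1) (hae : Complex.abs e < 1)
    (hex : e ≠ x) (hey : e ≠ y)
    (hx : N.eval x = 0) (hy : N.eval y = 0) (he : N.eval e = 0)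
    (hxs : N.eval ((starRingEnd ℂ) x)⁻¹ = 0) (hys : N.eval ((starRingEnd ℂ) y)⁻¹ = 0) :
    N = 0 := by
  classical
  have hix := inv_conj_big hx0 hax
  have hiy := inv_conj_big hy0 hay
  have hsb : ∀ p q : ℂ, Complex.abs p < 1 → 1 < Complex.abs q → p ≠ q := by
    intro p q hp hq h; rw [h] at hp; linarith
  have hii : ((starRingEnd ℂ) x)⁻¹ ≠ ((starRingEnd ℂ) y)⁻¹ := by
    intro h
    have h2 := inv_injective h
    exact hxy (by simpa using congrArg (starRingEnd ℂ) h2)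
  set s : Finset ℂ := {e, x, y, ((starRingEnd ℂ) x)⁻¹, ((starRingEnd ℂ) y)⁻¹} with hsdef
  have hcard : s.card = 5 := by
    rw [hsdef]
    rw [Finset.card_insert_of_notMem, Finset.card_insert_of_notMem,
      Finset.card_insert_of_notMem, Finset.card_insert_of_notMem, Finset.card_singleton]
    · simp only [Finset.mem_singleton]; exact hii
    · simp only [Finset.mem_insert, Finset.mem_singleton, not_or]
      exact ⟨hsb _ _ hay hix, hsb _ _ hay hiy⟩
    · simp only [Finset.mem_insert, Finset.mem_singleton, not_or]
      exact ⟨hxy, hsb _ _ hax hix, hsb _ _ hax hiy⟩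
    · simp only [Finset.mem_insert, Finset.mem_singleton, not_or]
      exact ⟨hex, hey, hsb _ _ hae hix, hsb _ _ hae hiy⟩
  apply Polynomial.eq_zero_of_natDegree_lt_card_of_eval_eq_zero' N s
  · intro i hi
    rw [hsdef] at hi
    simp only [Finset.mem_insert, Finset.mem_singleton] at hi
    rcases hi with rfl | rfl | rfl | rfl | rfl <;> assumption
  · rw [hcard]; omega

theorem root_bound {N : Polynomial ℂ} (hdeg : N.natDegree ≤ 4)
    (hsym : ∀ z : ℂ, z ≠ 0 → N.eval z = 0 → N.eval (((starRingEnd ℂ) z)⁻¹) = 0)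
    {u v w : ℂ} (hu : Complex.abs u < 1) (hv : Complex.abs v < 1) (hw : Complex.abs w < 1)
    (huv : u ≠ v) (huw : u ≠ w) (hvw : v ≠ w)
    (h1 : N.eval u = 0) (h2 : N.eval v = 0) (h3 : N.eval w = 0) : N = 0 := by
  by_cases hu0 : u = 0
  · have hv0 : v ≠ 0 := fun h => huv (by rw [hu0, h])
    have hw0 : w ≠ 0 := fun h => huw (by rw [hu0, h])
    exact five_roots hdeg hv0 hw0 hvw hv hw hu huv huw h2 h3 h1
      (hsym v hv0 h2) (hsym w hw0 h3)
  · by_cases hv0 : v = 0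
    · have hw0 : w ≠ 0 := fun h => hvw (by rw [hv0, h])
      exact five_roots hdeg hu0 hw0 huw hu hw hv (Ne.symm huv) hvw h1 h3 h2
        (hsym u hu0 h1) (hsym w hw0 h3)
    · exact five_roots hdeg hu0 hv0 huv hu hv hw (Ne.symm huw) (Ne.symm hvw) h1 h2 h3
        (hsym u hu0 h1) (hsym v hv0 h2)

theorem oneSub_ne' {a z : ℂ} (ha : Complex.abs a < 1) (hz : Complex.abs z < 1) :
    (1 : ℂ) - (starRingEnd ℂ) a * z ≠ 0 := by
  intro h
  have h1 : Complex.abs ((starRingEnd ℂ) a * z) < 1 := by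
    rw [map_mul, Complex.abs_conj]
    nlinarith [Complex.abs.nonneg a, Complex.abs.nonneg z]
  have : (1 : ℂ) = (starRingEnd ℂ) a * z := by linear_combination h
  rw [← this] at h1
  simp at h1

noncomputable def Bf (lam α β γ : ℂ) : ℂ → ℂ := fun z =>
  lam * ((z - α) / (1 - (starRingEnd ℂ) α * z) * ((z - β) / (1 - (starRingEnd ℂ) β * z)) *
    ((z - γ) / (1 - (starRingEnd ℂ) γ * z)))

noncomputable def NP (α β γ : ℂ) : Polynomial ℂ :=
  C (1 - (starRingEnd ℂ) α * α) * ((X - C β) * (1 - C ((starRingEnd ℂ) β) * X)) *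
      ((X - C γ) * (1 - C ((starRingEnd ℂ) γ) * X)) +
    C (1 - (starRingEnd ℂ) β * β) * ((X - C α) * (1 - C ((starRingEnd ℂ) α) * X)) *
      ((X - C γ) * (1 - C ((starRingEnd ℂ) γ) * X)) +
    C (1 - (starRingEnd ℂ) γ * γ) * ((X - C α) * (1 - C ((starRingEnd ℂ) α) * X)) *
      ((X - C β) * (1 - C ((starRingEnd ℂ) β) * X))

theorem NP_natDegree_le (α β γ : ℂ) : (NP α β γ).natDegree ≤ 4 := by
  unfold NP
  compute_degree

theorem NP_eval (α β γ z : ℂ) : (NP α β γ).eval z =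
    (1 - (starRingEnd ℂ) α * α) * ((z - β) * (1 - (starRingEnd ℂ) β * z)) *
      ((z - γ) * (1 - (starRingEnd ℂ) γ * z)) +
    (1 - (starRingEnd ℂ) β * β) * ((z - α) * (1 - (starRingEnd ℂ) α * z)) *
      ((z - γ) * (1 - (starRingEnd ℂ) γ * z)) +
    (1 - (starRingEnd ℂ) γ * γ) * ((z - α) * (1 - (starRingEnd ℂ) α * z)) *
      ((z - β) * (1 - (starRingEnd ℂ) β * z)) := by
  simp [NP]

theorem NP_sym (α β γ : ℂ) {z : ℂ} (hz : z ≠ 0) :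
    (NP α β γ).eval (((starRingEnd ℂ) z)⁻¹) * ((starRingEnd ℂ) z)^4 =
      (starRingEnd ℂ) ((NP α β γ).eval z) := by
  have hcz : (starRingEnd ℂ) z ≠ 0 := by simpa using hz
  rw [NP_eval, NP_eval]
  simp only [map_add, map_mul, map_sub, map_one, Complex.conj_conj]
  field_simp


theorem alg_div {K : Type*} [Field K] (nA dA nB dB nC dC a b c : K)
    (hA : dA ≠ 0) (hB : dB ≠ 0) (hC : dC ≠ 0) :
    ((a / dA ^ 2 * (nB / dB) + nA / dA * (b / dB ^ 2)) * (nC / dC) +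
      nA / dA * (nB / dB) * (c / dC ^ 2)) * (dA * dB * dC) ^ 2 =
    a * nB * nC * dB * dC + nA * b * nC * dA * dC + nA * nB * c * dA * dB := by
  have hA2 : dA ^ 2 ≠ 0 := pow_ne_zero _ hA
  have hB2 : dB ^ 2 ≠ 0 := pow_ne_zero _ hB
  have hC2 : dC ^ 2 ≠ 0 := pow_ne_zero _ hC
  have h1 : dA ^ 2 * dB ≠ 0 := mul_ne_zero hA2 hB
  have h2 : dA * dB ^ 2 ≠ 0 := mul_ne_zero hA hB2
  have h3 : dA ^ 2 * dB * (dA * dB ^ 2) * dC ≠ 0 := mul_ne_zero (mul_ne_zero h1 h2) hC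
  have h4 : dA * dB * dC ^ 2 ≠ 0 := mul_ne_zero (mul_ne_zero hA hB) hC2
  have h5 : dA ^ 2 * dB * (dA * dB ^ 2) * dC * (dA * dB * dC ^ 2) ≠ 0 := mul_ne_zero h3 h4
  simp only [div_mul_div_comm]
  rw [div_add_div _ _ h1 h2]
  simp only [div_mul_div_comm]
  rw [div_add_div _ _ h3 h4, div_mul_eq_mul_div, div_eq_iff h5]
  ring

set_option maxHeartbeats 4000000 in
theorem Bf_deriv_eq (lam α β γ : ℂ) (hα : Complex.abs α < 1) (hβ : Complex.abs β < 1)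
    (hγ : Complex.abs γ < 1) {w : ℂ} (hw : Complex.abs w < 1) :
    deriv (Bf lam α β γ) w *
      ((1 - (starRingEnd ℂ) α * w) * (1 - (starRingEnd ℂ) β * w) *
        (1 - (starRingEnd ℂ) γ * w))^2 = lam * (NP α β γ).eval w := by
  have hdα := oneSub_ne' hα hw
  have hdβ := oneSub_ne' hβ hw
  have hdγ := oneSub_ne' hγ hw
  have hm0 : HasDerivAt (fun z : ℂ => (z - α) / (1 - (starRingEnd ℂ) α * z))
      ((1 * (1 - (starRingEnd ℂ) α * w) - (w - α) * -((starRingEnd ℂ) α * 1)) /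
        (1 - (starRingEnd ℂ) α * w)^2) w :=
    ((hasDerivAt_id w).sub_const α).div (((hasDerivAt_id w).const_mul _).const_sub 1) hdα
  have hm1 : HasDerivAt (fun z : ℂ => (z - β) / (1 - (starRingEnd ℂ) β * z))
      ((1 * (1 - (starRingEnd ℂ) β * w) - (w - β) * -((starRingEnd ℂ) β * 1)) /
        (1 - (starRingEnd ℂ) β * w)^2) w :=
    ((hasDerivAt_id w).sub_const β).div (((hasDerivAt_id w).const_mul _).const_sub 1) hdβ
  have hm2 : HasDerivAt (fun z : ℂ => (z - γ) / (1 - (starRingEnd ℂ) γ * z))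
      ((1 * (1 - (starRingEnd ℂ) γ * w) - (w - γ) * -((starRingEnd ℂ) γ * 1)) /
        (1 - (starRingEnd ℂ) γ * w)^2) w :=
    ((hasDerivAt_id w).sub_const γ).div (((hasDerivAt_id w).const_mul _).const_sub 1) hdγ
  have hBd := ((hm0.mul hm1).mul hm2).const_mul lam
  have hderiv := hBd.deriv
  change deriv (Bf lam α β γ) w = _ at hderiv
  simp only [Pi.mul_apply] at hderiv
  rw [hderiv, mul_assoc,
    alg_div (w - α) (1 - (starRingEnd ℂ) α * w) (w - β) (1 - (starRingEnd ℂ) β * w)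
      (w - γ) (1 - (starRingEnd ℂ) γ * w)
      (1 * (1 - (starRingEnd ℂ) α * w) - (w - α) * -((starRingEnd ℂ) α * 1))
      (1 * (1 - (starRingEnd ℂ) β * w) - (w - β) * -((starRingEnd ℂ) β * 1))
      (1 * (1 - (starRingEnd ℂ) γ * w) - (w - γ) * -((starRingEnd ℂ) γ * 1))
      hdα hdβ hdγ, NP_eval]
  ring

theorem Bf_differentiableAt (lam α β γ : ℂ) {w : ℂ}
    (h1 : (1:ℂ) - (starRingEnd ℂ) α * w ≠ 0) (h2 : (1:ℂ) - (starRingEnd ℂ) β * w ≠ 0)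
    (h3 : (1:ℂ) - (starRingEnd ℂ) γ * w ≠ 0) :
    DifferentiableAt ℂ (Bf lam α β γ) w := by
  have d0 : DifferentiableAt ℂ (fun z : ℂ => (z - α) / (1 - (starRingEnd ℂ) α * z)) w :=
    (((hasDerivAt_id w).sub_const α).div (((hasDerivAt_id w).const_mul _).const_sub 1) h1).differentiableAt
  have d1 : DifferentiableAt ℂ (fun z : ℂ => (z - β) / (1 - (starRingEnd ℂ) β * z)) w :=
    (((hasDerivAt_id w).sub_const β).div (((hasDerivAt_id w).const_mul _).const_sub 1) h2).differentiableAt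
  have d2 : DifferentiableAt ℂ (fun z : ℂ => (z - γ) / (1 - (starRingEnd ℂ) γ * z)) w :=
    (((hasDerivAt_id w).sub_const γ).div (((hasDerivAt_id w).const_mul _).const_sub 1) h3).differentiableAt
  exact ((d0.mul d1).mul d2).const_mul lam

theorem Bf_diffOn (lam α β γ : ℂ) (hα : Complex.abs α < 1) (hβ : Complex.abs β < 1)
    (hγ : Complex.abs γ < 1) : DifferentiableOn ℂ (Bf lam α β γ) (ball 0 1) := by
  intro v hv
  have hv' := memball.1 hv
  exact (Bf_differentiableAt lam α β γ (oneSub_ne hα hv') (oneSub_ne hβ hv')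
    (oneSub_ne hγ hv')).differentiableWithinAt

theorem crit (lam α β γ : ℂ) (hlam : Complex.abs lam = 1) (hα : Complex.abs α < 1)
    (hβ : Complex.abs β < 1) (hγ : Complex.abs γ < 1) {z₁ z₂ w : ℂ}
    (h1 : Complex.abs z₁ < 1) (h2 : Complex.abs z₂ < 1) (hne : z₁ ≠ z₂)
    (hc1 : deriv (Bf lam α β γ) z₁ = 0) (hc2 : deriv (Bf lam α β γ) z₂ = 0)
    (hw : Complex.abs w < 1) (hcw : deriv (Bf lam α β γ) w = 0) : w = z₁ ∨ w = z₂ := by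
  have hlam0 : lam ≠ 0 := by intro h; rw [h] at hlam; simp at hlam
  by_contra hcon
  push_neg at hcon
  obtain ⟨hw1, hw2⟩ := hcon
  have hroot : ∀ v, Complex.abs v < 1 → deriv (Bf lam α β γ) v = 0 →
      (NP α β γ).eval v = 0 := by
    intro v hv hdv
    have h := Bf_deriv_eq lam α β γ hα hβ hγ hv
    rw [hdv, zero_mul] at h
    exact (mul_eq_zero.1 h.symm).resolve_left hlam0
  have hsym : ∀ z : ℂ, z ≠ 0 → (NP α β γ).eval z = 0 →
      (NP α β γ).eval (((starRingEnd ℂ) z)⁻¹) = 0 := by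
    intro z hz0 hz
    have h := NP_sym α β γ hz0
    rw [hz, map_zero] at h
    have hcz : ((starRingEnd ℂ) z)^4 ≠ 0 := pow_ne_zero _ (by simpa using hz0)
    exact (mul_eq_zero.1 h).resolve_right hcz
  have hN : NP α β γ = 0 := root_bound (NP_natDegree_le α β γ) hsym h1 h2 hw hne
    (Ne.symm hw1) (Ne.symm hw2) (hroot _ h1 hc1) (hroot _ h2 hc2) (hroot _ hw hcw)
  have hder0 : ∀ v ∈ ball (0:ℂ) 1, deriv (Bf lam α β γ) v = 0 := by
    intro v hv
    have hv' := memball.1 hv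
    have heq := Bf_deriv_eq lam α β γ hα hβ hγ hv'
    rw [hN] at heq
    simp only [eval_zero, mul_zero] at heq
    have hQ : ((1 - (starRingEnd ℂ) α * v) * (1 - (starRingEnd ℂ) β * v) *
        (1 - (starRingEnd ℂ) γ * v))^2 ≠ 0 :=
      pow_ne_zero _ (mul_ne_zero (mul_ne_zero (oneSub_ne hα hv') (oneSub_ne hβ hv'))
        (oneSub_ne hγ hv'))
    exact (mul_eq_zero.1 heq).resolve_right hQ
  have hdiff := Bf_diffOn lam α β γ hα hβ hγ
  have hzero : ∀ v ∈ ball (0:ℂ) 1, fderivWithin ℂ (Bf lam α β γ) (ball 0 1) v = 0 := by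
    intro v hv
    rw [fderivWithin_of_isOpen isOpen_ball hv]
    have hda : DifferentiableAt ℂ (Bf lam α β γ) v := by
      have hv' := memball.1 hv
      exact Bf_differentiableAt lam α β γ (oneSub_ne hα hv') (oneSub_ne hβ hv') (oneSub_ne hγ hv')
    have hd : HasDerivAt (Bf lam α β γ) 0 v := by
      have h := hda.hasDerivAt
      rwa [hder0 v hv] at h
    rw [hd.hasFDerivAt.fderiv]
    ext x
    simp
  -- contradiction: Bf is not constant
  have hBα : Bf lam α β γ α = 0 := by
    simp [Bf, sub_self, zero_div]
  set M : ℝ := max (max (Complex.abs α) (Complex.abs β)) (Complex.abs γ) with hMdef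
  have hM0 : 0 ≤ M := le_trans (Complex.abs.nonneg γ) (le_max_right _ _)
  have hM1 : M < 1 := max_lt (max_lt hα hβ) hγ
  set r : ℝ := (1 + M) / 2 with hrdef
  have hr0 : 0 ≤ r := by positivity
  have hr1 : r < 1 := by rw [hrdef]; linarith
  have hrM : M < r := by rw [hrdef]; linarith
  set w' : ℂ := (r : ℂ) with hw'def
  have habsw' : Complex.abs w' = r := by
    rw [hw'def, Complex.abs_ofReal, _root_.abs_of_nonneg hr0]
  have hw'lt : Complex.abs w' < 1 := by rw [habsw']; exact hr1
  have hne' : ∀ x : ℂ, Complex.abs x ≤ M → w' ≠ x := by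
    intro x hx h
    rw [← h, habsw'] at hx
    linarith
  have hBw' : Bf lam α β γ w' ≠ 0 := by
    have hα' : w' - α ≠ 0 := sub_ne_zero.2 (hne' α (le_trans (le_max_left _ _) (le_max_left _ _)))
    have hβ' : w' - β ≠ 0 := sub_ne_zero.2 (hne' β (le_trans (le_max_right _ _) (le_max_left _ _)))
    have hγ' : w' - γ ≠ 0 := sub_ne_zero.2 (hne' γ (le_max_right _ _))
    exact mul_ne_zero hlam0 (mul_ne_zero (mul_ne_zero
      (div_ne_zero hα' (oneSub_ne hα hw'lt)) (div_ne_zero hβ' (oneSub_ne hβ hw'lt)))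
      (div_ne_zero hγ' (oneSub_ne hγ hw'lt)))
  have hcst : Bf lam α β γ α = Bf lam α β γ w' :=
    (convex_ball (0:ℂ) 1).is_const_of_fderivWithin_eq_zero hdiff hzero
      (memball.2 hα) (memball.2 hw'lt)
  rw [hBα] at hcst
  exact hBw' hcst.symm

theorem fixed2 {f : ℂ → ℂ} (hd : DifferentiableOn ℂ f (ball 0 1))
    (hm : MapsTo f (ball 0 1) (ball 0 1)) {p q : ℂ} (hp : p ∈ ball (0:ℂ) 1)
    (hq : q ∈ ball (0:ℂ) 1) (hpq : p ≠ q) (hfp : f p = p) (hfq : f q = q) :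
    ∀ z ∈ ball (0:ℂ) 1, f z = z := by
  have hpa : Complex.abs p < 1 := memball.1 hp
  set g : ℂ → ℂ := fun z => mo p (f (mo p z)) with hgdef
  have hgd : DifferentiableOn ℂ g (ball 0 1) := by
    apply DifferentiableOn.comp (mo_diffOn hpa)
    · exact hd.comp (mo_diffOn hpa) (mo_mapsTo hpa)
    · exact hm.comp (mo_mapsTo hpa)
  have hgm : MapsTo g (ball 0 1) (ball 0 1) :=
    ((mo_mapsTo hpa).comp hm).comp (mo_mapsTo hpa)
  have hg0 : g 0 = 0 := by
    simp only [hgdef, mo_zero, hfp, mo_self]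
  set q' := mo p q with hq'def
  have hq'm : q' ∈ ball (0:ℂ) 1 := memball.2 (mo_mem hpa (memball.1 hq))
  have hq'0 : q' ≠ 0 := by
    intro h
    exact hpq.symm (mo_eq_zero hpa (memball.1 hq) h)
  have hgq' : g q' = q' := by
    simp only [hgdef, hq'def, mo_mo hpa (memball.1 hq), hfq]
  have heq : Complex.abs (g q') = Complex.abs q' := by rw [hgq']
  have hlin := schwarz_eq hgd hgm hg0 hq'm hq'0 heq
  intro z hz
  have h1 : g (mo p z) = mo p z := by
    rw [hlin (mo p z) (mo_mapsTo hpa hz), hgq', div_self hq'0, one_mul]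
  have h2 : mo p (f z) = mo p z := by
    have := h1
    simp only [hgdef] at this
    rwa [mo_mo hpa (memball.1 hz)] at this
  have h3 := congrArg (mo p) h2
  rwa [mo_mo hpa (memball.1 (hm hz)), mo_mo hpa (memball.1 hz)] at h3

theorem half_mem : (1/2 : ℂ) ∈ ball (0:ℂ) 1 := by
  rw [memball, map_div₀, map_one, Complex.abs_two]
  norm_num

theorem rot {f : ℂ → ℂ} (hd : DifferentiableOn ℂ f (ball 0 1))
    (hm : MapsTo f (ball 0 1) (ball 0 1)) (h0 : f 0 = 0)
    (hinv : ∀ z ∈ ball (0:ℂ) 1, f (f z) = z) :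
    (∀ z ∈ ball (0:ℂ) 1, f z = z) ∨ (∀ z ∈ ball (0:ℂ) 1, f z = -z) := by
  have habs : ∀ z ∈ ball (0:ℂ) 1, Complex.abs (f z) = Complex.abs z := by
    intro z hz
    refine le_antisymm (schwarz_le hd hm h0 hz) ?_
    have h1 := schwarz_le hd hm h0 (hm hz)
    rwa [hinv z hz] at h1
  have hz₀ : (1/2 : ℂ) ∈ ball (0:ℂ) 1 := half_mem
  have hz₀' : (1/2 : ℂ) ≠ 0 := by norm_num
  have hlin := schwarz_eq hd hm h0 hz₀ hz₀' (habs _ hz₀)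
  set c : ℂ := f (1/2) / (1/2) with hcdef
  have hc2 : c ^ 2 = 1 := by
    have h1 := hinv (1/2) hz₀
    have h2 : f (1/2 : ℂ) = c * (1/2) := hlin _ hz₀
    have hfm : f (1/2 : ℂ) ∈ ball (0:ℂ) 1 := hm hz₀
    have h3 : f (f (1/2 : ℂ)) = c * (c * (1/2)) := by
      rw [← h2]; rw [hlin _ hfm, h2]
    rw [h1] at h3
    have : (c^2 - 1) * (1/2 : ℂ) = 0 := by linear_combination -h3
    have h4 : c^2 - 1 = 0 := by
      rcases mul_eq_zero.1 this with h | h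
      · exact h
      · norm_num at h
    linear_combination h4
  have hc : c = 1 ∨ c = -1 := by
    have : (c - 1) * (c + 1) = 0 := by linear_combination hc2
    rcases mul_eq_zero.1 this with h | h
    · left; linear_combination h
    · right; linear_combination h
  rcases hc with h | h
  · left; intro z hz; rw [hlin z hz, h, one_mul]
  · right; intro z hz; rw [hlin z hz, h]; ring

theorem invol_fix {ψ : ℂ → ℂ} (hd : DifferentiableOn ℂ ψ (ball 0 1))
    (hm : MapsTo ψ (ball 0 1) (ball 0 1))
    (hinv : ∀ z ∈ ball (0:ℂ) 1, ψ (ψ z) = z)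
    (hnid : ∃ w ∈ ball (0:ℂ) 1, ψ w ≠ w) :
    ∃ c₀ ∈ ball (0:ℂ) 1, ψ c₀ = c₀ ∧ ∀ z ∈ ball (0:ℂ) 1, mo c₀ (ψ (mo c₀ z)) = -z := by
  have h0m : (0:ℂ) ∈ ball (0:ℂ) 1 := by rw [memball]; simp
  set a := ψ 0 with hadef
  have ham : a ∈ ball (0:ℂ) 1 := hm h0m
  have haa : Complex.abs a < 1 := memball.1 ham
  by_cases ha0 : a = 0
  · -- ψ 0 = 0
    have h0 : ψ 0 = 0 := by rw [← hadef, ha0]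
    rcases rot hd hm h0 hinv with hid | hneg
    · obtain ⟨w, hw, hwne⟩ := hnid
      exact absurd (hid w hw) hwne
    · refine ⟨0, h0m, h0, ?_⟩
      intro z hz
      rw [mo_zero']
      have hzneg : -z ∈ ball (0:ℂ) 1 := by
        rw [memball, AbsoluteValue.map_neg]; exact memball.1 hz
      simp only [mo_zero']
      rw [hneg (-z) hzneg]
      ring
  · -- a ≠ 0 : show ψ = mo a on the ball
    have hψa : ψ a = 0 := by rw [hadef]; exact hinv 0 h0m
    set g : ℂ → ℂ := fun z => mo a (ψ z) with hgdef
    have hgd : DifferentiableOn ℂ g (ball 0 1) :=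
      DifferentiableOn.comp (mo_diffOn haa) hd hm
    have hgm : MapsTo g (ball 0 1) (ball 0 1) := (mo_mapsTo haa).comp hm
    have hg0 : g 0 = 0 := by simp only [hgdef, ← hadef, mo_self]
    set g' : ℂ → ℂ := fun z => ψ (mo a z) with hg'def
    have hg'd : DifferentiableOn ℂ g' (ball 0 1) :=
      DifferentiableOn.comp hd (mo_diffOn haa) (mo_mapsTo haa)
    have hg'm : MapsTo g' (ball 0 1) (ball 0 1) := hm.comp (mo_mapsTo haa)
    have hg'0 : g' 0 = 0 := by simp only [hg'def, mo_zero, hψa]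
    have habs : ∀ z ∈ ball (0:ℂ) 1, Complex.abs (g z) = Complex.abs z := by
      intro z hz
      refine le_antisymm (schwarz_le hgd hgm hg0 hz) ?_
      have h1 : g' (g z) = z := by
        simp only [hgdef, hg'def]
        rw [mo_mo haa (memball.1 (hm hz))]
        exact hinv z hz
      have h2 := schwarz_le hg'd hg'm hg'0 (hgm hz)
      rwa [h1] at h2
    have hlin := schwarz_eq hgd hgm hg0 half_mem (by norm_num) (habs _ half_mem)
    set c : ℂ := g (1/2) / (1/2) with hcdef
    -- g a = a  and  g a = c * a  force  c = 1
    have hga : g a = a := by simp only [hgdef, hψa, mo_zero]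
    have hc1 : c = 1 := by
      have h1 := hlin a ham
      rw [hga] at h1
      have : (c - 1) * a = 0 := by linear_combination -h1
      rcases mul_eq_zero.1 this with h | h
      · linear_combination h
      · exact absurd h ha0
    have hψmo : ∀ z ∈ ball (0:ℂ) 1, ψ z = mo a z := by
      intro z hz
      have h1 := hlin z hz
      rw [hc1, one_mul] at h1
      have h2 := congrArg (mo a) h1
      simp only [hgdef] at h2
      rwa [mo_mo haa (memball.1 (hm hz))] at h2
    -- construct the fixed point
    set s : ℝ := Real.sqrt (1 - (Complex.abs a)^2) with hsdef
    have haapos : 0 < Complex.abs a := by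
      rw [AbsoluteValue.pos_iff]; exact ha0
    have hs2 : s^2 = 1 - (Complex.abs a)^2 := by
      rw [hsdef]; exact Real.sq_sqrt (by nlinarith)
    have hspos : 0 < s := by
      rw [hsdef]; apply Real.sqrt_pos.2; nlinarith
    have hslt : s < 1 := by nlinarith
    have hconj : (starRingEnd ℂ) a ≠ 0 := by
      simp only [ne_eq, _root_.map_eq_zero]; exact ha0
    set c₀ : ℂ := ((1:ℂ) - (s:ℝ)) / (starRingEnd ℂ) a with hc₀def
    have habsc₀ : Complex.abs c₀ < 1 := by
      rw [hc₀def, map_div₀, Complex.abs_conj]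
      rw [div_lt_one haapos]
      have h1 : ((1:ℂ) - (s:ℝ)) = (((1 - s : ℝ)):ℂ) := by push_cast; ring
      rw [h1, Complex.abs_ofReal]
      have h2 : |1 - s| = 1 - s := abs_of_nonneg (by linarith)
      rw [h2]
      by_contra hle
      push_neg at hle
      have h3 : (Complex.abs a)^2 ≤ (1 - s)^2 := by nlinarith
      nlinarith
    have hc₀m : c₀ ∈ ball (0:ℂ) 1 := memball.2 habsc₀
    have hmulconj : (starRingEnd ℂ) a * a = ((Complex.abs a : ℂ))^2 := by
      rw [mul_comm, Complex.mul_conj, ← Complex.sq_abs]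
      push_cast
      ring
    have hs2' : ((s:ℂ))^2 = 1 - ((Complex.abs a : ℂ))^2 := by
      have := congrArg (fun x : ℝ => (x:ℂ)) hs2
      push_cast at this
      exact this
    have hnum : ((1:ℂ)-(s:ℂ))^2 - 2*(1-(s:ℂ)) + (starRingEnd ℂ) a * a = 0 := by
      rw [hmulconj]
      linear_combination hs2'
    have hkey : (starRingEnd ℂ) a * c₀^2 - 2*c₀ + a = 0 := by
      have heq2 : (starRingEnd ℂ) a * c₀^2 - 2*c₀ + a
          = (((1:ℂ)-(s:ℂ))^2 - 2*(1-(s:ℂ)) + (starRingEnd ℂ) a * a) / (starRingEnd ℂ) a := by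
        rw [hc₀def]
        field_simp
      rw [heq2, hnum, zero_div]
    have hfix : ψ c₀ = c₀ := by
      rw [hψmo c₀ hc₀m, mo, div_eq_iff (oneSub_ne haa habsc₀)]
      linear_combination hkey
    -- conjugate and apply rot
    set f : ℂ → ℂ := fun z => mo c₀ (ψ (mo c₀ z)) with hfdef
    have hfd : DifferentiableOn ℂ f (ball 0 1) := by
      apply DifferentiableOn.comp (mo_diffOn habsc₀)
      · exact hd.comp (mo_diffOn habsc₀) (mo_mapsTo habsc₀)
      · exact hm.comp (mo_mapsTo habsc₀)
    have hfm : MapsTo f (ball 0 1) (ball 0 1) :=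
      ((mo_mapsTo habsc₀).comp hm).comp (mo_mapsTo habsc₀)
    have hf0 : f 0 = 0 := by
      simp only [hfdef, mo_zero, hfix, mo_self]
    have hfinv : ∀ z ∈ ball (0:ℂ) 1, f (f z) = z := by
      intro z hz
      simp only [hfdef]
      rw [mo_mo habsc₀ (memball.1 (hm (mo_mapsTo habsc₀ hz)))]
      rw [hinv _ (mo_mapsTo habsc₀ hz)]
      exact mo_mo habsc₀ (memball.1 hz)
    rcases rot hfd hfm hf0 hfinv with hid | hneg
    · exfalso
      obtain ⟨w, hw, hwne⟩ := hnid
      apply hwne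
      have h1 := hid (mo c₀ w) (mo_mapsTo habsc₀ hw)
      simp only [hfdef] at h1
      rw [mo_mo habsc₀ (memball.1 hw)] at h1
      have h2 := congrArg (mo c₀) h1
      rw [mo_mo habsc₀ (memball.1 (hm hw)), mo_mo habsc₀ (memball.1 hw)] at h2
      exact h2
    · exact ⟨c₀, hc₀m, hfix, hneg⟩

set_option maxHeartbeats 1000000

/-- Let `B` be a degree three finite Blaschke product whose two critical
points `z₁ ≠ z₂` in the unit disk are distinct. If `ψ` is a holomorphic automorphism
of the disk with `B ∘ ψ = B` on the disk, then `ψ` is the identity. -/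
theorem stmt5 (lam : ℂ) (hlam : ‖lam‖ = 1)
    (a : Fin 3 → ℂ) (ha : ∀ j, a j ∈ unitDisk)
    (B : ℂ → ℂ)
    (hB : ∀ z : ℂ, B z = lam * ∏ j, (z - a j) / (1 - (starRingEnd ℂ) (a j) * z))
    (z₁ z₂ : ℂ) (hz₁ : z₁ ∈ unitDisk) (hz₂ : z₂ ∈ unitDisk) (hne : z₁ ≠ z₂)
    (hc₁ : deriv B z₁ = 0) (hc₂ : deriv B z₂ = 0)
    (ψ : ℂ → ℂ) (hψ : DifferentiableOn ℂ ψ unitDisk)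
    (hbij : Set.BijOn ψ unitDisk unitDisk)
    (hcomm : ∀ z ∈ unitDisk, B (ψ z) = B z) :
    Set.EqOn ψ id unitDisk := by
  have hD : unitDisk = ball (0:ℂ) 1 := by
    ext z
    simp [unitDisk, Metric.mem_ball, Complex.dist_eq]
  have hα : Complex.abs (a 0) < 1 := ha 0
  have hβ : Complex.abs (a 1) < 1 := ha 1
  have hγ : Complex.abs (a 2) < 1 := ha 2
  have hB' : B = Bf lam (a 0) (a 1) (a 2) := by
    funext z
    rw [hB z, Fin.prod_univ_three]
    rfl
  subst hB'
  rw [hD] at hz₁ hz₂ hψ hbij hcomm ⊢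
  set α := a 0
  set β := a 1
  set γ := a 2
  have habsz₁ : Complex.abs z₁ < 1 := memball.1 hz₁
  have habsz₂ : Complex.abs z₂ < 1 := memball.1 hz₂
  have hψm : MapsTo ψ (ball 0 1) (ball 0 1) := hbij.mapsTo
  have hderiv_eq : ∀ v ∈ ball (0:ℂ) 1,
      deriv (Bf lam α β γ) (ψ v) * deriv ψ v = deriv (Bf lam α β γ) v := by
    intro v hv
    have hev : (fun z => Bf lam α β γ (ψ z)) =ᶠ[nhds v] (Bf lam α β γ) := by
      filter_upwards [isOpen_ball.mem_nhds hv] with x hx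
      exact hcomm x hx
    have hdψ : DifferentiableAt ℂ ψ v := (hψ v hv).differentiableAt (isOpen_ball.mem_nhds hv)
    have habsψv : Complex.abs (ψ v) < 1 := memball.1 (hψm hv)
    have hdB : DifferentiableAt ℂ (Bf lam α β γ) (ψ v) :=
      Bf_differentiableAt lam α β γ (oneSub_ne hα habsψv) (oneSub_ne hβ habsψv)
        (oneSub_ne hγ habsψv)
    have hcomp := deriv_comp (x := v) hdB hdψ
    rw [show (Bf lam α β γ ∘ ψ) = (fun z => Bf lam α β γ (ψ z)) from rfl] at hcomp
    rw [← hcomp]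
    exact hev.deriv_eq
  obtain ⟨w₁, hw₁m, hw₁⟩ : ∃ w₁ ∈ ball (0:ℂ) 1, ψ w₁ = z₁ := hbij.surjOn hz₁
  obtain ⟨w₂, hw₂m, hw₂⟩ : ∃ w₂ ∈ ball (0:ℂ) 1, ψ w₂ = z₂ := hbij.surjOn hz₂
  have hcw₁ : deriv (Bf lam α β γ) w₁ = 0 := by
    have h := hderiv_eq w₁ hw₁m
    rw [hw₁, hc₁, zero_mul] at h
    exact h.symm
  have hcw₂ : deriv (Bf lam α β γ) w₂ = 0 := by
    have h := hderiv_eq w₂ hw₂m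
    rw [hw₂, hc₂, zero_mul] at h
    exact h.symm
  have hA1 : w₁ = z₁ ∨ w₁ = z₂ := crit lam α β γ hlam hα hβ hγ habsz₁ habsz₂ hne hc₁ hc₂
    (memball.1 hw₁m) hcw₁
  have hA2 : w₂ = z₁ ∨ w₂ = z₂ := crit lam α β γ hlam hα hβ hγ habsz₁ habsz₂ hne hc₁ hc₂
    (memball.1 hw₂m) hcw₂
  have hwne : w₁ ≠ w₂ := by
    intro h
    exact hne (by rw [← hw₁, h, hw₂])
  rcases hA1 with hB1 | hB1
  · have hψz₁ : ψ z₁ = z₁ := hB1 ▸ hw₁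
    have hB2 : w₂ = z₂ := by
      rcases hA2 with h | h
      · exact absurd (h.trans hB1.symm) hwne.symm
      · exact h
    have hψz₂ : ψ z₂ = z₂ := hB2 ▸ hw₂
    intro z hz
    exact fixed2 hψ hψm hz₁ hz₂ hne hψz₁ hψz₂ z hz
  · exfalso
    have hψz₂ : ψ z₂ = z₁ := hB1 ▸ hw₁
    have hB2 : w₂ = z₁ := by
      rcases hA2 with h | h
      · exact h
      · exact absurd (h.trans hB1.symm).symm hwne
    have hψz₁ : ψ z₁ = z₂ := hB2 ▸ hw₂
    have hinv2 : ∀ v ∈ ball (0:ℂ) 1, ψ (ψ v) = v := by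
      have hgd : DifferentiableOn ℂ (fun v => ψ (ψ v)) (ball 0 1) :=
        DifferentiableOn.comp hψ hψ hψm
      have hgm : MapsTo (fun v => ψ (ψ v)) (ball 0 1) (ball 0 1) := hψm.comp hψm
      have hg1 : ψ (ψ z₁) = z₁ := by rw [hψz₁, hψz₂]
      have hg2 : ψ (ψ z₂) = z₂ := by rw [hψz₂, hψz₁]
      exact fun v hv => fixed2 hgd hgm hz₁ hz₂ hne hg1 hg2 v hv
    have hnid : ∃ w ∈ ball (0:ℂ) 1, ψ w ≠ w := by
      refine ⟨z₁, hz₁, ?_⟩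
      rw [hψz₁]
      exact Ne.symm hne
    obtain ⟨c₀, hc₀m, hc₀fix, hrot⟩ := invol_fix hψ hψm hinv2 hnid
    have habsc₀ : Complex.abs c₀ < 1 := memball.1 hc₀m
    set g : ℂ → ℂ := fun t => Bf lam α β γ (mo c₀ t) with hgdef
    have heven : ∀ t ∈ ball (0:ℂ) 1, g (-t) = g t := by
      intro t ht
      have h1 := hrot t ht
      have hmt : mo c₀ t ∈ ball (0:ℂ) 1 := mo_mapsTo habsc₀ ht
      have hψmt : ψ (mo c₀ t) ∈ ball (0:ℂ) 1 := hψm hmt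
      calc g (-t) = Bf lam α β γ (mo c₀ (-t)) := rfl
        _ = Bf lam α β γ (mo c₀ (mo c₀ (ψ (mo c₀ t)))) := by rw [← h1]
        _ = Bf lam α β γ (ψ (mo c₀ t)) := by rw [mo_mo habsc₀ (memball.1 hψmt)]
        _ = Bf lam α β γ (mo c₀ t) := hcomm _ hmt
        _ = g t := rfl
    have habs0 : Complex.abs (0:ℂ) < 1 := by simp
    have hdmo0 : HasDerivAt (mo c₀)
        (-((1 - (starRingEnd ℂ) c₀ * c₀) / (1 - (starRingEnd ℂ) c₀ * 0)^2)) 0 :=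
      hasDerivAt_mo c₀ (oneSub_ne habsc₀ habs0)
    have hdB0 : DifferentiableAt ℂ (Bf lam α β γ) (mo c₀ 0) := by
      rw [mo_zero]
      exact Bf_differentiableAt lam α β γ (oneSub_ne hα habsc₀) (oneSub_ne hβ habsc₀)
        (oneSub_ne hγ habsc₀)
    have hgdiff0 : DifferentiableAt ℂ g 0 := hdB0.comp 0 hdmo0.differentiableAt
    have hderg0 : deriv g 0 = 0 := by
      have hev2 : (fun t => g (-t)) =ᶠ[nhds (0:ℂ)] g := by
        filter_upwards [isOpen_ball.mem_nhds (memball.2 habs0)] with x hx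
        exact heven x hx
      have hg0' : HasDerivAt g (deriv g 0) (-(0:ℂ)) := by
        rw [neg_zero]; exact hgdiff0.hasDerivAt
      have hneg : HasDerivAt (fun t : ℂ => -t) (-1) 0 := (hasDerivAt_id (0:ℂ)).neg
      have hcomp := HasDerivAt.comp (0:ℂ) hg0' hneg
      rw [show (g ∘ fun t : ℂ => -t) = (fun t => g (-t)) from rfl] at hcomp
      have h3 : deriv g 0 * (-1) = deriv g 0 := by
        rw [← hcomp.deriv]
        exact hev2.deriv_eq
      linear_combination (-1/2 : ℂ) * h3
    have hdmoval : deriv (mo c₀) 0 = -(1 - (starRingEnd ℂ) c₀ * c₀) := by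
      rw [hdmo0.deriv]
      simp
    have hdmone : deriv (mo c₀) 0 ≠ 0 := by
      rw [hdmoval]
      exact neg_ne_zero.2 (oneSub_ne habsc₀ habsc₀)
    have hcompg := deriv_comp (x := (0:ℂ)) hdB0 hdmo0.differentiableAt
    rw [show (Bf lam α β γ ∘ mo c₀) = g from rfl] at hcompg
    rw [hderg0, mo_zero] at hcompg
    have hcritc₀ : deriv (Bf lam α β γ) c₀ = 0 := by
      rcases mul_eq_zero.1 hcompg.symm with h | h
      · exact h
      · exact absurd h hdmone
    have hfin := crit lam α β γ hlam hα hβ hγ habsz₁ habsz₂ hne hc₁ hc₂ habsc₀ hcritc₀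
    rcases hfin with rfl | rfl
    · rw [hψz₁] at hc₀fix; exact hne hc₀fix.symm
    · rw [hψz₂] at hc₀fix; exact hne hc₀fix
end

section
/- Let B be a finite Blaschke product of degree n and p a polynomial of degree n all of whose critical values lie in the open unit disk D. If φ : D → ℂ is holomorphic with B = p ∘ φ on D, then φ(D) = D_p, where D_p = {z ∈ ℂ : |p(z)| < 1}. -/
open Complex Polynomial

open Metric Set Filter Topology

namespace Stmt10Aux


lemma denom_ne_zero {aj z : ℂ} (haj : ‖aj‖ < 1) (hz : ‖z‖ ≤ 1) :
    1 - (starRingEnd ℂ) aj * z ≠ 0 := by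
  intro h
  have h1 : (1 : ℂ) = (starRingEnd ℂ) aj * z := by linear_combination h
  have : (1 : ℝ) = ‖(starRingEnd ℂ) aj * z‖ := by
    rw [← h1]; simp
  rw [norm_mul, Complex.norm_conj] at this
  nlinarith [norm_nonneg aj, norm_nonneg z]

lemma normSq_lt_one {z : ℂ} (h : ‖z‖ < 1) : Complex.normSq z < 1 := by
  nlinarith [Complex.sq_norm z, norm_nonneg z]

lemma factor_lt_one {aj z : ℂ} (haj : ‖aj‖ < 1) (hz : ‖z‖ < 1) :
    ‖(z - aj) / (1 - (starRingEnd ℂ) aj * z)‖ < 1 := by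
  have hden := denom_ne_zero haj hz.le
  have h1 := normSq_lt_one hz
  have h2 := normSq_lt_one haj
  rw [norm_div, div_lt_one (norm_pos_iff.mpr hden)]
  have key : Complex.normSq (z - aj) < Complex.normSq (1 - (starRingEnd ℂ) aj * z) := by
    simp only [Complex.normSq_apply, Complex.sub_re, Complex.sub_im, Complex.mul_re,
      Complex.mul_im, Complex.one_re, Complex.one_im, Complex.conj_re, Complex.conj_im] at *
    nlinarith [h1, h2]
  have := Real.sqrt_lt_sqrt (Complex.normSq_nonneg _) key
  rwa [← Complex.norm_def, ← Complex.norm_def] at this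

lemma factor_eq_one {aj z : ℂ} (haj : ‖aj‖ < 1) (hz : ‖z‖ = 1) :
    ‖(z - aj) / (1 - (starRingEnd ℂ) aj * z)‖ = 1 := by
  have hnum : z - aj ≠ 0 := by
    intro h
    rw [sub_eq_zero] at h
    rw [h] at hz; exact absurd hz (ne_of_lt haj)
  have hid : 1 - (starRingEnd ℂ) aj * z = z * ((starRingEnd ℂ) (z - aj)) := by
    have : z * (starRingEnd ℂ) z = 1 := by
      rw [Complex.mul_conj]
      norm_cast
      nlinarith [Complex.sq_norm z, Complex.normSq_nonneg z]
    rw [map_sub, mul_sub, this]; ring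
  rw [norm_div, hid, norm_mul, Complex.norm_conj, hz, one_mul, div_self]
  exact norm_ne_zero_iff.mpr hnum

lemma exists_radius (p : Polynomial ℂ) (hd : 0 < p.degree) (t : ℝ) :
    ∃ R : ℝ, 0 < R ∧ ∀ z : ℂ, R ≤ ‖z‖ → t ≤ ‖p.eval z‖ := by
  have h : Tendsto (fun z : ℂ => ‖p.eval z‖) (Filter.cocompact ℂ) atTop :=
    p.tendsto_norm_atTop hd tendsto_norm_cocompact_atTop
  have hev : ∀ᶠ z : ℂ in Filter.cocompact ℂ, t ≤ ‖p.eval z‖ := h.eventually_ge_atTop t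
  rw [Filter.eventually_iff, Filter.mem_cocompact] at hev
  obtain ⟨K, hK, hKs⟩ := hev
  obtain ⟨r, hr⟩ := hK.isBounded.subset_closedBall 0
  refine ⟨max r 0 + 1, by positivity, fun z hz => ?_⟩
  have : z ∉ K := by
    intro hzK
    have := hr hzK
    rw [mem_closedBall, Complex.dist_eq, sub_zero] at this
    have h2 : max r 0 + 1 ≤ r := le_trans hz this
    have := le_max_left r 0
    linarith
  simpa using hKs this

lemma preconnected_iInter_directed {ι : Type*} [Nonempty ι] {t : ι → Set ℂ}
    (htd : Directed (· ⊇ ·) t) (htc : ∀ i, IsCompact (t i))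
    (htconn : ∀ i, IsPreconnected (t i)) : IsPreconnected (⋂ i, t i) := by
  set S := ⋂ i, t i with hS
  intro u v hu hv hcov ⟨z1, hz1S, hz1u⟩ ⟨z2, hz2S, hz2v⟩
  by_contra hne
  rw [Set.not_nonempty_iff_eq_empty] at hne
  have hScl : IsClosed S := isClosed_iInter fun i => (htc i).isClosed
  have hSc : IsCompact S := (htc (Classical.arbitrary ι)).of_isClosed_subset hScl
    (iInter_subset _ _)
  have hP : IsCompact (S \ v) := hSc.of_isClosed_subset (hScl.sdiff hv) diff_subset
  have hQ : IsCompact (S \ u) := hSc.of_isClosed_subset (hScl.sdiff hu) diff_subset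
  have hdisj : Disjoint (S \ v) (S \ u) := by
    rw [Set.disjoint_iff]
    rintro w ⟨⟨hwS, hwv⟩, _, hwu⟩
    rcases hcov hwS with h | h
    · exact absurd h hwu
    · exact absurd h hwv
  obtain ⟨u', v', hu', hv', hPu', hQv', huv'⟩ :=
    SeparatedNhds.of_isCompact_isCompact hP hQ hdisj
  have hScov : S ⊆ u' ∪ v' := by
    intro w hwS
    by_cases hwv : w ∈ v
    · by_cases hwu : w ∈ u
      · exact absurd (⟨hwS, hwu, hwv⟩ : w ∈ S ∩ (u ∩ v))
          (Set.eq_empty_iff_forall_notMem.1 hne w)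
      · exact Or.inr (hQv' ⟨hwS, hwu⟩)
    · exact Or.inl (hPu' ⟨hwS, hwv⟩)
  have hF : ∀ i, (t i \ (u' ∪ v')).Nonempty := by
    intro i
    rw [Set.diff_nonempty]
    intro hsub
    have h1 : z1 ∈ u' := hPu' ⟨hz1S, fun hzv => by
      have : z1 ∈ S ∩ (u ∩ v) := ⟨hz1S, hz1u, hzv⟩
      rw [hne] at this; exact this⟩
    have h2 : z2 ∈ v' := hQv' ⟨hz2S, fun hzu => by
      have : z2 ∈ S ∩ (u ∩ v) := ⟨hz2S, hzu, hz2v⟩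
      rw [hne] at this; exact this⟩
    have hSi : S ⊆ t i := iInter_subset _ _
    obtain ⟨w, hw⟩ := htconn i u' v' hu' hv' hsub ⟨z1, hSi hz1S, h1⟩ ⟨z2, hSi hz2S, h2⟩
    exact (huv'.ne_of_mem hw.2.1 hw.2.2) rfl
  have hne2 : (⋂ i, t i \ (u' ∪ v')).Nonempty := by
    apply IsCompact.nonempty_iInter_of_directed_nonempty_isCompact_isClosed
    · intro i j
      obtain ⟨k, hki, hkj⟩ := htd i j
      exact ⟨k, diff_subset_diff_left hki, diff_subset_diff_left hkj⟩
    · exact hF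
    · exact fun i => (htc i).of_isClosed_subset ((htc i).isClosed.sdiff (hu'.union hv'))
        diff_subset
    · exact fun i => (htc i).isClosed.sdiff (hu'.union hv')
  obtain ⟨w, hw⟩ := hne2
  rw [Set.mem_iInter] at hw
  have hwS : w ∈ S := by
    rw [hS, Set.mem_iInter]; exact fun i => (hw i).1
  exact (hw (Classical.arbitrary ι)).2 (hScov hwS)

lemma mem_component_of_mem_closure {Ω : Set ℂ} {x z : ℂ} (hΩ : IsOpen Ω)
    (hz : z ∈ Ω) (hcl : z ∈ closure (connectedComponentIn Ω x)) :
    z ∈ connectedComponentIn Ω x := by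
  obtain ⟨δ, hδ, hball⟩ := Metric.isOpen_iff.1 hΩ z hz
  obtain ⟨a, haA, hadist⟩ := Metric.mem_closure_iff.1 hcl δ hδ
  have haball : a ∈ ball z δ := by simpa [mem_ball, dist_comm] using hadist
  have hsub : ball z δ ⊆ connectedComponentIn Ω a :=
    (convex_ball z δ).isPreconnected.subset_connectedComponentIn haball hball
  rw [← connectedComponentIn_eq haA] at hsub
  exact hsub (mem_ball_self hδ)

lemma local_structure (p : Polynomial ℂ) {z₀ : ℂ} {T : ℝ}
    (hd : (Polynomial.derivative p).eval z₀ ≠ 0)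
    (hz₀ : ‖p.eval z₀‖ = T) (hT : 0 < T) :
    ∃ U : Set ℂ, IsOpen U ∧ z₀ ∈ U ∧
      IsPreconnected (U ∩ {z : ℂ | ‖p.eval z‖ < T}) ∧
      ∀ s ∈ U, ‖p.eval s‖ ≤ T →
        s ∈ closure (U ∩ {z : ℂ | ‖p.eval z‖ < T}) := by
  have hsd : HasStrictDerivAt (fun w => p.eval w) ((Polynomial.derivative p).eval z₀) z₀ :=
    p.hasStrictDerivAt z₀
  set e := HasStrictFDerivAt.toOpenPartialHomeomorph _ (hsd.hasStrictFDerivAt_equiv hd) with he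
  have hecoe : (e : ℂ → ℂ) = fun w => p.eval w :=
    HasStrictFDerivAt.toOpenPartialHomeomorph_coe (hsd.hasStrictFDerivAt_equiv hd)
  have hz₀src : z₀ ∈ e.source := HasStrictFDerivAt.mem_toOpenPartialHomeomorph_source (hsd.hasStrictFDerivAt_equiv hd)
  set w₀ : ℂ := p.eval z₀ with hw₀
  have hw₀tgt : w₀ ∈ e.target := by
    have := e.map_source hz₀src
    rwa [show e z₀ = w₀ by rw [hecoe]] at this
  obtain ⟨r, hr, hball⟩ := Metric.isOpen_iff.1 e.open_target w₀ hw₀tgt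
  set U : Set ℂ := e.source ∩ (fun w => p.eval w) ⁻¹' (ball w₀ r) with hU
  have hUopen : IsOpen U := e.open_source.inter (isOpen_ball.preimage p.continuous)
  have hz₀U : z₀ ∈ U := ⟨hz₀src, by simp [mem_ball, hr, hw₀]⟩
  set W : Set ℂ := ball w₀ r ∩ ball (0 : ℂ) T with hW
  have habs : ∀ w : ℂ, w ∈ ball (0 : ℂ) T ↔ ‖w‖ < T := by
    intro w; rw [mem_ball, Complex.dist_eq, sub_zero]
  have hVeq : U ∩ {z : ℂ | ‖p.eval z‖ < T} = e.symm '' W := by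
    ext z
    constructor
    · rintro ⟨⟨hzsrc, hzball⟩, hzlt⟩
      refine ⟨p.eval z, ⟨hzball, (habs _).2 hzlt⟩, ?_⟩
      have : e z = p.eval z := by rw [hecoe]
      rw [← this, e.left_inv hzsrc]
    · rintro ⟨w, ⟨hwball, hwlt⟩, rfl⟩
      have hwtgt : w ∈ e.target := hball hwball
      have hsrc : e.symm w ∈ e.source := e.map_target hwtgt
      have heval : p.eval (e.symm w) = w := by
        have := e.right_inv hwtgt
        rwa [show e (e.symm w) = p.eval (e.symm w) by rw [hecoe]] at this
      refine ⟨⟨hsrc, ?_⟩, ?_⟩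
      · simpa [heval] using hwball
      · simpa [Set.mem_setOf_eq, heval] using (habs _).1 hwlt
  have hWconv : Convex ℝ W := (convex_ball w₀ r).inter (convex_ball (0 : ℂ) T)
  have hVpre : IsPreconnected (U ∩ {z : ℂ | ‖p.eval z‖ < T}) := by
    rw [hVeq]
    exact hWconv.isPreconnected.image _ (e.continuousOn_symm.mono
      (fun w hw => hball hw.1))
  refine ⟨U, hUopen, hz₀U, hVpre, ?_⟩
  intro s hs hsle
  rcases lt_or_eq_of_le hsle with hlt | heq
  · exact subset_closure ⟨hs, hlt⟩
  · -- |p.eval s| = T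
    set w : ℂ := p.eval s with hwdef
    have hwball : w ∈ ball w₀ r := hs.2
    have hwcl : w ∈ closure W := by
      have hne : (𝓝[Set.Iio (1 : ℝ)] 1).NeBot := nhdsLT_neBot 1
      have htend : Tendsto (fun t : ℝ => (t : ℂ) * w) (𝓝[Set.Iio (1 : ℝ)] 1) (𝓝 w) := by
        have : Tendsto (fun t : ℝ => (t : ℂ) * w) (𝓝 (1 : ℝ)) (𝓝 ((1 : ℂ) * w)) :=
          (Complex.continuous_ofReal.mul continuous_const).tendsto 1
        rw [one_mul] at this
        exact this.mono_left nhdsWithin_le_nhds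
      apply mem_closure_of_tendsto htend
      have h1 : ∀ᶠ t : ℝ in 𝓝[Set.Iio (1 : ℝ)] 1, (t : ℂ) * w ∈ ball w₀ r :=
        htend.eventually (isOpen_ball.mem_nhds hwball)
      have h2 : ∀ᶠ t : ℝ in 𝓝[Set.Iio (1 : ℝ)] 1, (0 : ℝ) < t := by
        apply eventually_nhdsWithin_of_eventually_nhds
        exact eventually_gt_nhds one_pos
      have h3 : ∀ᶠ t : ℝ in 𝓝[Set.Iio (1 : ℝ)] 1, t < 1 :=
        eventually_mem_nhdsWithin.mono fun t ht => ht
      filter_upwards [h1, h2, h3] with t ht1 ht2 ht3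
      refine ⟨ht1, (habs _).2 ?_⟩
      rw [norm_mul, Complex.norm_real, Real.norm_eq_abs, abs_of_pos ht2, ← heq]
      calc t * ‖p.eval s‖ < 1 * ‖p.eval s‖ := by
            apply mul_lt_mul_of_pos_right ht3
            rw [heq]; exact hT
        _ = ‖p.eval s‖ := one_mul _
    have hssrc : s ∈ e.source := hs.1
    have hsymm : e.symm w = s := by
      have : e s = w := by rw [hecoe]
      rw [← this, e.left_inv hssrc]
    have hcont : ContinuousWithinAt e.symm W w :=
      (e.continuousAt_symm (hball hwball)).continuousWithinAt
    have := hcont.mem_closure_image hwcl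
    rw [hsymm] at this
    rwa [hVeq]


lemma preconnected_sublevel (p : Polynomial ℂ) (hd : 0 < p.degree)
    (hcrit : ∀ w : ℂ, (Polynomial.derivative p).eval w = 0 → ‖p.eval w‖ < 1) :
    IsPreconnected {z : ℂ | ‖p.eval z‖ < 1} := by
  set Ω : ℝ → Set ℂ := fun t => {z : ℂ | ‖p.eval z‖ < t} with hΩdef
  have hcontabs : Continuous fun z : ℂ => ‖p.eval z‖ :=
    continuous_norm.comp p.continuous
  have hΩopen : ∀ t, IsOpen (Ω t) := fun t => isOpen_lt hcontabs continuous_const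
  have hΩmono : ∀ {t t' : ℝ}, t ≤ t' → Ω t ⊆ Ω t' := fun h z hz => lt_of_lt_of_le hz h
  have key : ∀ x ∈ Ω 1, ∀ y ∈ Ω 1, y ∈ connectedComponentIn (Ω 1) x := by
    intro x hx y hy
    set G : Set ℝ := {t : ℝ | y ∈ connectedComponentIn (Ω t) x} with hGdef
    have hmono : ∀ {t t' : ℝ}, t ≤ t' → t ∈ G → t' ∈ G := fun h ht =>
      connectedComponentIn_mono x (hΩmono h) ht
    have hGbig : ∃ t, t ∈ G := by
      set ρ : ℝ := max ‖x‖ ‖y‖ with hρ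
      have hxB : x ∈ closedBall (0 : ℂ) ρ := by
        simp only [mem_closedBall, dist_zero_right]; exact le_max_left _ _
      have hyB : y ∈ closedBall (0 : ℂ) ρ := by
        simp only [mem_closedBall, dist_zero_right]; exact le_max_right _ _
      obtain ⟨zm, hzmB, hzmax⟩ := (isCompact_closedBall (0 : ℂ) ρ).exists_isMaxOn
        ⟨x, hxB⟩ hcontabs.continuousOn
      set t₀ : ℝ := ‖p.eval zm‖ + 1 with ht₀
      have hBsub : closedBall (0 : ℂ) ρ ⊆ Ω t₀ := by
        intro z hz
        simp only [hΩdef, Set.mem_setOf_eq]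
        exact lt_of_le_of_lt (hzmax hz) (lt_add_one _)
      exact ⟨t₀, (convex_closedBall (0 : ℂ) ρ).isPreconnected.subset_connectedComponentIn
        hxB hBsub hyB⟩
    have hstep : ∀ t ∈ G, ∃ s, s < t ∧ ∀ t', s < t' → t' ∈ G := by
      intro t ht
      have hxt : x ∈ Ω t := connectedComponentIn_nonempty_iff.mp ⟨y, ht⟩
      have hCopen : IsOpen (connectedComponentIn (Ω t) x) := (hΩopen t).connectedComponentIn
      have hCconn : IsConnected (connectedComponentIn (Ω t) x) :=
        ⟨⟨x, mem_connectedComponentIn hxt⟩, isPreconnected_connectedComponentIn⟩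
      have hpath : IsPathConnected (connectedComponentIn (Ω t) x) :=
        (hCopen.isConnected_iff_isPathConnected).mp hCconn
      obtain ⟨γ, hγ⟩ := hpath.joinedIn x (mem_connectedComponentIn hxt) y ht
      set K : Set ℂ := Set.range γ with hK
      have hxK : x ∈ K := ⟨0, γ.source⟩
      have hyK : y ∈ K := ⟨1, γ.target⟩
      have hKc : IsCompact K := isCompact_range γ.continuous
      have hKsub : K ⊆ connectedComponentIn (Ω t) x := by
        rintro w ⟨i, rfl⟩; exact hγ i
      obtain ⟨zm, hzmK, hzmax⟩ := hKc.exists_isMaxOn ⟨x, hxK⟩ hcontabs.continuousOn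
      have hzmΩ : zm ∈ Ω t := connectedComponentIn_subset _ _ (hKsub hzmK)
      refine ⟨‖p.eval zm‖, hzmΩ, ?_⟩
      intro t' hst'
      have hKt' : K ⊆ Ω t' := fun w hw => lt_of_le_of_lt (hzmax hw) hst'
      have hKpre : IsPreconnected K := (isConnected_range γ.continuous).isPreconnected
      exact hKpre.subset_connectedComponentIn hxK hKt' hyK
    by_contra h1G
    have hGgt1 : ∀ t ∈ G, 1 < t := fun t ht =>
      lt_of_not_ge fun hle => h1G (hmono hle ht)
    have hGne : G.Nonempty := hGbig
    have hbdd : BddBelow G := ⟨1, fun t ht => (hGgt1 t ht).le⟩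
    set T : ℝ := sInf G with hTdef
    have hT1 : 1 ≤ T := le_csInf hGne fun t ht => (hGgt1 t ht).le
    have hTnot : T ∉ G := by
      intro hTG
      obtain ⟨s, hsT, hs⟩ := hstep T hTG
      have h1 : (s + T) / 2 ∈ G := hs _ (by linarith)
      have h2 := csInf_le hbdd h1
      rw [← hTdef] at h2
      linarith
    have hGt : ∀ t, T < t → t ∈ G := by
      intro t htT
      obtain ⟨g, hgG, hgt⟩ := exists_lt_of_csInf_lt hGne htT
      exact hmono hgt.le hgG
    obtain ⟨R, hR0, hR⟩ := exists_radius p hd (T + 2)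
    have hbound : ∀ t : ℝ, t ≤ T + 1 → Ω t ⊆ closedBall (0 : ℂ) R := by
      intro t hle z hz
      simp only [mem_closedBall, dist_zero_right]
      by_contra hzR
      push_neg at hzR
      have := hR z hzR.le
      have : ‖p.eval z‖ < t := hz
      linarith [hR z hzR.le]
    have hIoc : (T + 1) ∈ Set.Ioc T (T + 1) := ⟨by linarith, le_refl _⟩
    haveI : Nonempty ↥(Set.Ioc T (T + 1)) := ⟨⟨T + 1, hIoc⟩⟩
    set K : ↥(Set.Ioc T (T + 1)) → Set ℂ :=
      fun i => closure (connectedComponentIn (Ω i.1) x) with hKdef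
    have hxΩ : ∀ i : ↥(Set.Ioc T (T + 1)), x ∈ Ω i.1 := fun i =>
      hΩmono (by linarith [i.2.1, hT1] : (1 : ℝ) ≤ i.1) hx
    have htd : Directed (· ⊇ ·) K := by
      intro i j
      refine ⟨⟨min i.1 j.1, ⟨lt_min i.2.1 j.2.1, le_trans (min_le_left _ _) i.2.2⟩⟩, ?_, ?_⟩
      · exact closure_mono (connectedComponentIn_mono x (hΩmono (min_le_left _ _)))
      · exact closure_mono (connectedComponentIn_mono x (hΩmono (min_le_right _ _)))
    have htc : ∀ i, IsCompact (K i) := by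
      intro i
      apply Metric.isCompact_of_isClosed_isBounded isClosed_closure
      apply Metric.isBounded_closedBall.subset
      exact closure_minimal (le_trans (connectedComponentIn_subset _ _)
        (hbound i.1 i.2.2)) isClosed_closedBall
    have htconn : ∀ i, IsPreconnected (K i) := fun i =>
      isPreconnected_connectedComponentIn.closure
    set S : Set ℂ := ⋂ i, K i with hSdef
    have hSpre : IsPreconnected S := preconnected_iInter_directed htd htc htconn
    have hxS : x ∈ S := mem_iInter.2 fun i =>
      subset_closure (mem_connectedComponentIn (hxΩ i))
    have hyS : y ∈ S := mem_iInter.2 fun i => subset_closure (hGt i.1 i.2.1)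
    have hSlev : ∀ z ∈ S, ‖p.eval z‖ ≤ T := by
      intro z hz
      by_contra hgt
      push_neg at hgt
      set t : ℝ := min ((T + ‖p.eval z‖) / 2) (T + 1) with htdef
      have htI : t ∈ Set.Ioc T (T + 1) :=
        ⟨lt_min (by linarith) (by linarith), min_le_right _ _⟩
      have h1 : z ∈ K ⟨t, htI⟩ := mem_iInter.1 hz _
      have h2 : K ⟨t, htI⟩ ⊆ {w : ℂ | ‖p.eval w‖ ≤ t} := by
        apply closure_minimal
        · intro w hw
          have hwΩ : w ∈ Ω t := connectedComponentIn_subset _ _ hw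
          simp only [hΩdef, Set.mem_setOf_eq] at hwΩ
          exact le_of_lt hwΩ
        · exact isClosed_le hcontabs continuous_const
      have h3 : ‖p.eval z‖ ≤ t := h2 h1
      have h4 : t ≤ (T + ‖p.eval z‖) / 2 := min_le_left _ _
      linarith
    set A : Set ℂ := connectedComponentIn (Ω T) x with hAdef
    have hyclA : y ∉ closure A := by
      intro h
      exact hTnot (mem_component_of_mem_closure (hΩopen T) (hΩmono hT1 hy) h)
    have hrelopen : ∀ z ∈ S ∩ closure A, ∃ U, IsOpen U ∧ z ∈ U ∧ S ∩ U ⊆ closure A := by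
      rintro z ⟨hzS, hzcl⟩
      rcases lt_or_eq_of_le (hSlev z hzS) with hlt | heq
      · have hzA : z ∈ A := mem_component_of_mem_closure (hΩopen T) hlt hzcl
        exact ⟨A, (hΩopen T).connectedComponentIn, hzA, fun w hw => subset_closure hw.2⟩
      · have hd0 : (Polynomial.derivative p).eval z ≠ 0 := by
          intro h0
          have := hcrit z h0
          rw [heq] at this
          linarith
        obtain ⟨U, hUo, hzU, hVpre, hVcl⟩ :=
          local_structure p hd0 heq (by linarith : (0 : ℝ) < T)
        obtain ⟨aU, haU, haA⟩ := _root_.mem_closure_iff.1 hzcl U hUo hzU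
        have haV : aU ∈ U ∩ {w : ℂ | ‖p.eval w‖ < T} :=
          ⟨haU, connectedComponentIn_subset _ _ haA⟩
        have hVA : U ∩ {w : ℂ | ‖p.eval w‖ < T} ⊆ A := by
          have h1 := hVpre.subset_connectedComponentIn haV
            (inter_subset_right : _ ⊆ Ω T)
          rwa [← connectedComponentIn_eq haA] at h1
        refine ⟨U, hUo, hzU, fun w hw => ?_⟩
        exact closure_mono hVA (hVcl w hw.2 (hSlev w hw.1))
    choose! U hUo hUmem hUsub using hrelopen
    set u : Set ℂ := ⋃ (z : ℂ) (_ : z ∈ S ∩ closure A), U z with hudef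
    have huo : IsOpen u := isOpen_iUnion fun z => isOpen_iUnion fun hz => hUo z hz
    have hvo : IsOpen (closure A)ᶜ := isClosed_closure.isOpen_compl
    have hcov : S ⊆ u ∪ (closure A)ᶜ := by
      intro z hz
      by_cases h : z ∈ closure A
      · exact Or.inl (mem_iUnion.2 ⟨z, mem_iUnion.2 ⟨⟨hz, h⟩, hUmem z ⟨hz, h⟩⟩⟩)
      · exact Or.inr h
    have hxA : x ∈ closure A := subset_closure (mem_connectedComponentIn (hΩmono hT1 hx))
    have hxu : x ∈ S ∩ u :=
      ⟨hxS, mem_iUnion.2 ⟨x, mem_iUnion.2 ⟨⟨hxS, hxA⟩, hUmem x ⟨hxS, hxA⟩⟩⟩⟩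
    have hyv : y ∈ S ∩ (closure A)ᶜ := ⟨hyS, hyclA⟩
    obtain ⟨w, hwS, hwu, hwv⟩ := hSpre u (closure A)ᶜ huo hvo hcov ⟨x, hxu⟩ ⟨y, hyv⟩
    obtain ⟨z, hzmem⟩ := mem_iUnion.1 hwu
    obtain ⟨hz, hwU⟩ := mem_iUnion.1 hzmem
    exact hwv (hUsub z hz ⟨hwS, hwU⟩)
  rcases Set.eq_empty_or_nonempty {z : ℂ | ‖p.eval z‖ < 1} with he | ⟨x, hx⟩
  · rw [he]; exact isPreconnected_empty
  · exact isPreconnected_of_forall x fun y hy =>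
      ⟨connectedComponentIn (Ω 1) x, connectedComponentIn_subset _ _,
        mem_connectedComponentIn hx, key x hx y hy, isPreconnected_connectedComponentIn⟩


end Stmt10Aux

namespace Stmt10Aux

lemma unitDisk_eq : unitDisk = Metric.ball (0 : ℂ) 1 := by
  ext z
  simp [unitDisk, Metric.mem_ball, Complex.dist_eq]

lemma isOpen_unitDisk : IsOpen unitDisk := by
  rw [unitDisk_eq]; exact Metric.isOpen_ball

lemma isPreconnected_unitDisk : IsPreconnected unitDisk := by
  rw [unitDisk_eq]; exact (convex_ball (0 : ℂ) 1).isPreconnected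

lemma infinite_unitDisk : unitDisk.Infinite := by
  apply Set.infinite_of_injective_forall_mem
    (f := fun k : ℕ => ((((k : ℝ) + 2)⁻¹ : ℝ) : ℂ))
  · intro k l h
    rw [Complex.ofReal_inj] at h
    have hk : (0 : ℝ) < (k : ℝ) + 2 := by positivity
    have hl : (0 : ℝ) < (l : ℝ) + 2 := by positivity
    have : ((k : ℝ) + 2) = ((l : ℝ) + 2) := by
      rw [← inv_inv ((k : ℝ) + 2), h, inv_inv]
    have : (k : ℝ) = l := by linarith
    exact_mod_cast this
  · intro k
    have hk : (0 : ℝ) < (k : ℝ) + 2 := by positivity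
    have h1 : ((k : ℝ) + 2)⁻¹ < 1 := by
      rw [inv_lt_one_iff₀]; right; linarith
    simp only [unitDisk, Set.mem_setOf_eq, Complex.norm_real, Real.norm_eq_abs]
    rw [abs_of_pos (by positivity)]
    exact h1

end Stmt10Aux


open Stmt10Aux in
/-- Let `B` be a finite Blaschke product of degree `n` and `p` a polynomial
of degree `n` all of whose critical values lie in the open unit disk. If `φ` is holomorphic
on the disk with `B = p ∘ φ` there, then `φ(D) = D_p = {z : |p(z)| < 1}`. -/
theorem stmt10 (n : ℕ) (hn : 1 ≤ n) (lam : ℂ) (hlam : ‖lam‖ = 1)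
    (a : Fin n → ℂ) (ha : ∀ j, a j ∈ unitDisk)
    (B : ℂ → ℂ)
    (hB : ∀ z : ℂ, B z = lam * ∏ j, (z - a j) / (1 - (starRingEnd ℂ) (a j) * z))
    (p : Polynomial ℂ) (hdeg : p.natDegree = n)
    (hcrit : ∀ w : ℂ, (Polynomial.derivative p).eval w = 0 → ‖p.eval w‖ < 1)
    (φ : ℂ → ℂ) (hφ : DifferentiableOn ℂ φ unitDisk)
    (hcomp : ∀ z ∈ unitDisk, B z = p.eval (φ z)) :
    φ '' unitDisk = {z : ℂ | ‖p.eval z‖ < 1} := by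
  have haj : ∀ j, ‖a j‖ < 1 := ha
  have hpne : p ≠ 0 := by
    intro h
    rw [h, Polynomial.natDegree_zero] at hdeg
    omega
  have hpdeg : 0 < p.degree := by
    rw [Polynomial.degree_eq_natDegree hpne, hdeg]
    exact_mod_cast hn
  have j0 : Fin n := ⟨0, hn⟩
  -- forward inclusion
  have hsub1 : φ '' unitDisk ⊆ {z : ℂ | ‖p.eval z‖ < 1} := by
    rintro ζ ⟨z, hz, rfl⟩
    have hzlt : ‖z‖ < 1 := hz
    show ‖p.eval (φ z)‖ < 1
    rw [← hcomp z hz, hB z, norm_mul, hlam, one_mul, norm_prod]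
    rw [← Finset.mul_prod_erase Finset.univ _ (Finset.mem_univ j0)]
    have h1 : ∏ j ∈ Finset.univ.erase j0,
        ‖(z - a j) / (1 - (starRingEnd ℂ) (a j) * z)‖ ≤ 1 := by
      apply Finset.prod_le_one
      · exact fun j _ => norm_nonneg _
      · exact fun j _ => (factor_lt_one (haj j) hzlt).le
    calc ‖(z - a j0) / (1 - (starRingEnd ℂ) (a j0) * z)‖ *
          ∏ j ∈ Finset.univ.erase j0,
            ‖(z - a j) / (1 - (starRingEnd ℂ) (a j) * z)‖
        ≤ ‖(z - a j0) / (1 - (starRingEnd ℂ) (a j0) * z)‖ * 1 := by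
          apply mul_le_mul_of_nonneg_left h1 (norm_nonneg _)
      _ < 1 := by rw [mul_one]; exact factor_lt_one (haj j0) hzlt
  -- B vanishes at a j0, and is nonzero somewhere
  have hlamne : lam ≠ 0 := by
    intro h; rw [h] at hlam; simp at hlam
  have hBa0 : B (a j0) = 0 := by
    rw [hB]
    rw [Finset.prod_eq_zero (Finset.mem_univ j0) (by simp)]
    ring
  obtain ⟨z₀, hz₀D, hz₀notin⟩ := ((infinite_unitDisk.diff (Set.finite_range a)).nonempty : (unitDisk \ Set.range a).Nonempty)
  have hz₀lt : ‖z₀‖ < 1 := hz₀D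
  have hBz₀ : B z₀ ≠ 0 := by
    rw [hB]
    apply mul_ne_zero hlamne
    rw [Finset.prod_ne_zero_iff]
    intro j _
    apply div_ne_zero
    · rw [sub_ne_zero]
      exact fun h => hz₀notin ⟨j, h.symm⟩
    · exact denom_ne_zero (haj j) hz₀lt.le
  -- open mapping
  have hana : AnalyticOnNhd ℂ φ unitDisk := hφ.analyticOnNhd isOpen_unitDisk
  have hΩopen : IsOpen (φ '' unitDisk) := by
    rcases hana.is_constant_or_isOpen isPreconnected_unitDisk with ⟨w, hw⟩ | hopen
    · exfalso
      have e1 : p.eval w = 0 := by rw [← hw (a j0) (ha j0), ← hcomp _ (ha j0), hBa0]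
      have e2 : p.eval w ≠ 0 := by rw [← hw z₀ hz₀D, ← hcomp _ hz₀D]; exact hBz₀
      exact e2 e1
    · exact hopen unitDisk subset_rfl isOpen_unitDisk
  -- continuity of B on the closed disk
  have hBcont : ∀ z : ℂ, ‖z‖ ≤ 1 → ContinuousAt B z := by
    intro z hz
    have hfun : B = fun w => lam * ∏ j, (w - a j) / (1 - (starRingEnd ℂ) (a j) * w) :=
      funext hB
    rw [hfun]
    apply ContinuousAt.mul continuousAt_const
    have : ∀ j : Fin n, ContinuousAt
        (fun w : ℂ => (w - a j) / (1 - (starRingEnd ℂ) (a j) * w)) z := by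
      intro j
      exact ContinuousAt.div ((continuous_id.sub continuous_const).continuousAt)
        ((continuous_const.sub (continuous_const.mul continuous_id)).continuousAt)
        (denom_ne_zero (haj j) hz)
    exact tendsto_finset_prod _ fun j _ => this j
  -- closedness of the image in the sublevel set
  have hclosed : ∀ ζ ∈ {z : ℂ | ‖p.eval z‖ < 1},
      ζ ∈ closure (φ '' unitDisk) → ζ ∈ φ '' unitDisk := by
    intro ζ hζ hcl
    obtain ⟨c, hcmem, hctend⟩ := mem_closure_iff_seq_limit.1 hcl
    have hex : ∀ k, ∃ z ∈ unitDisk, φ z = c k := fun k => by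
      obtain ⟨z, hz, hφz⟩ := hcmem k; exact ⟨z, hz, hφz⟩
    choose z hzD hzφ using hex
    have hzball : ∀ k, z k ∈ Metric.closedBall (0 : ℂ) 1 := fun k => by
      have : ‖z k‖ < 1 := hzD k
      simp only [Metric.mem_closedBall, Complex.dist_eq, sub_zero]
      exact this.le
    obtain ⟨zl, hzlmem, ψ, hψmono, hψtend⟩ :=
      (isCompact_closedBall (0 : ℂ) 1).tendsto_subseq hzball
    have hzlabs : ‖zl‖ ≤ 1 := by
      simpa [Metric.mem_closedBall, Complex.dist_eq] using hzlmem
    have hBtend : Filter.Tendsto (fun k => B (z (ψ k))) Filter.atTop (nhds (B zl)) :=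
      ((hBcont zl hzlabs).tendsto).comp hψtend
    have hBeq : ∀ k, B (z k) = p.eval (c k) := fun k => by
      rw [hcomp (z k) (hzD k), hzφ k]
    have hptend : Filter.Tendsto (fun k => p.eval (c k)) Filter.atTop (nhds (p.eval ζ)) :=
      (p.continuous.continuousAt.tendsto).comp hctend
    have hBzl : B zl = p.eval ζ := by
      have h2 : Filter.Tendsto (fun k => B (z (ψ k))) Filter.atTop (nhds (p.eval ζ)) := by
        have := hptend.comp (hψmono.tendsto_atTop)
        simpa [Function.comp_def, hBeq] using this
      exact tendsto_nhds_unique hBtend h2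
    have hzllt : ‖zl‖ < 1 := by
      rcases lt_or_eq_of_le hzlabs with h | h
      · exact h
      · exfalso
        have habs : ‖B zl‖ = 1 := by
          rw [hB zl, norm_mul, hlam, one_mul, norm_prod]
          rw [Finset.prod_eq_one fun j _ => factor_eq_one (haj j) h]
        rw [hBzl] at habs
        have := hζ
        simp only [Set.mem_setOf_eq] at this
        linarith
    have hφcont : ContinuousWithinAt φ unitDisk zl := hφ.continuousOn zl hzllt
    have ht1 : Filter.Tendsto (fun k => φ (z (ψ k))) Filter.atTop (nhds (φ zl)) := by
      apply hφcont.tendsto.comp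
      rw [tendsto_nhdsWithin_iff]
      exact ⟨hψtend, Filter.Eventually.of_forall fun k => hzD (ψ k)⟩
    have ht2 : Filter.Tendsto (fun k => φ (z (ψ k))) Filter.atTop (nhds ζ) := by
      have := hctend.comp (hψmono.tendsto_atTop)
      simpa [Function.comp_def, hzφ] using this
    exact ⟨zl, hzllt, (tendsto_nhds_unique ht2 ht1).symm⟩
  -- conclude by preconnectedness
  have hpre := preconnected_sublevel p hpdeg hcrit
  apply Set.Subset.antisymm hsub1
  intro ζ hζ
  by_contra hnot
  have hcov : {z : ℂ | ‖p.eval z‖ < 1} ⊆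
      (φ '' unitDisk) ∪ (closure (φ '' unitDisk))ᶜ := by
    intro w hw
    by_cases h : w ∈ closure (φ '' unitDisk)
    · exact Or.inl (hclosed w hw h)
    · exact Or.inr h
  have hne1 : ({z : ℂ | ‖p.eval z‖ < 1} ∩ (φ '' unitDisk)).Nonempty :=
    ⟨φ (a j0), hsub1 ⟨a j0, ha j0, rfl⟩, ⟨a j0, ha j0, rfl⟩⟩
  have hne2 : ({z : ℂ | ‖p.eval z‖ < 1} ∩ (closure (φ '' unitDisk))ᶜ).Nonempty :=
    ⟨ζ, hζ, fun h => hnot (hclosed ζ hζ h)⟩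
  obtain ⟨w, hwD, hwu, hwv⟩ := hpre _ _ hΩopen (isClosed_closure.isOpen_compl)
    hcov hne1 hne2
  exact hwv (subset_closure hwu)
end

section
/- If all critical values of a polynomial p of degree n ≥ 1 lie in the open unit disk D, then the sublevel set D_p = {z ∈ ℂ : |p(z)| < 1} is connected. -/
open Complex Polynomial Set Metric Filter Topology

namespace Stmt12Aux

noncomputable section

variable (p : Polynomial ℂ)

/-- local partial homeomorphism at a noncritical point -/
lemma local_phom {z : ℂ} (hz : (derivative p).eval z ≠ 0) :
    ∃ e : OpenPartialHomeomorph ℂ ℂ, (e : ℂ → ℂ) = (fun x => p.eval x) ∧ z ∈ e.source := by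
  have h := (p.hasStrictDerivAt z).hasStrictFDerivAt_equiv hz
  exact ⟨h.toOpenPartialHomeomorph _, h.toOpenPartialHomeomorph_coe,
    h.mem_toOpenPartialHomeomorph_source⟩

/-- Uniform local injectivity of `p` on a compact set free of critical points. -/
lemma uniform_inj {Γ : Set ℂ} (hΓ : IsCompact Γ)
    (hd : ∀ z ∈ Γ, (derivative p).eval z ≠ 0) :
    ∃ ε > 0, ∀ z ∈ Γ, Set.InjOn (fun x => p.eval x) (ball z ε) := by
  classical
  have hloc : ∀ z ∈ Γ, ∃ rz > 0, Set.InjOn (fun x => p.eval x) (ball z rz) := by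
    intro z hz
    obtain ⟨e, hecoe, hzs⟩ := local_phom p (hd z hz)
    obtain ⟨rz, hrz, hball⟩ := Metric.isOpen_iff.1 e.open_source z hzs
    exact ⟨rz, hrz, by rw [← hecoe]; exact e.injOn.mono hball⟩
  choose rf hrf hinj using hloc
  obtain ⟨t, hcover⟩ := hΓ.elim_nhds_subcover' (fun z hz => ball z (rf z hz / 2))
    (fun z hz => ball_mem_nhds z (by have := hrf z hz; positivity))
  rcases t.eq_empty_or_nonempty with hte | htne
  · refine ⟨1, one_pos, fun z hz => ?_⟩
    exfalso
    have := hcover hz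
    simp [hte] at this
  · refine ⟨t.inf' htne (fun x => rf x.1 x.2 / 2), ?_, ?_⟩
    · rw [gt_iff_lt, Finset.lt_inf'_iff]
      intro x _
      have := hrf x.1 x.2; positivity
    · intro z hz
      have := hcover hz
      simp only [Set.mem_iUnion] at this
      obtain ⟨x, hxt, hxball⟩ := this
      apply (hinj x.1 x.2).mono
      intro y hy
      rw [mem_ball] at *
      have h1 : t.inf' htne (fun x => rf x.1 x.2 / 2) ≤ rf x.1 x.2 / 2 :=
        Finset.inf'_le _ hxt
      calc dist y x.1 ≤ dist y z + dist z x.1 := dist_triangle _ _ _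
        _ < rf x.1 x.2 := by linarith

lemma continuous_pe : Continuous (fun x : ℂ => p.eval x) := by
  continuity

/-- Uniform openness of `p` on a compact set free of critical points. -/
lemma uniform_open {Γ : Set ℂ} (hΓ : IsCompact Γ)
    (hd : ∀ z ∈ Γ, (derivative p).eval z ≠ 0) {ε : ℝ} (hε : 0 < ε) :
    ∃ δ > 0, ∀ z ∈ Γ, ball (p.eval z) δ ⊆ (fun x => p.eval x) '' (ball z ε) := by
  classical
  have hloc : ∀ z ∈ Γ, ∃ δz > 0, ∃ ρz > 0,
      ∀ x ∈ ball z ρz, ball (p.eval x) δz ⊆ (fun u => p.eval u) '' (ball x ε) := by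
    intro z hz
    obtain ⟨e, hecoe, hzs⟩ := local_phom p (hd z hz)
    have hopen : IsOpen (e '' (ball z (ε/2) ∩ e.source)) :=
      e.isOpen_image_of_subset_source (isOpen_ball.inter e.open_source)
        inter_subset_right
    have hmem : p.eval z ∈ e '' (ball z (ε/2) ∩ e.source) := by
      refine ⟨z, ⟨mem_ball_self (by positivity), hzs⟩, ?_⟩
      rw [hecoe]
    obtain ⟨δ₀, hδ₀, hball₀⟩ := Metric.isOpen_iff.1 hopen _ hmem
    obtain ⟨ρ₀, hρ₀, hcont⟩ := Metric.continuous_iff.1 (continuous_pe p) z (δ₀/2) (by positivity)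
    refine ⟨δ₀/2, by positivity, min ρ₀ (ε/2), by positivity, ?_⟩
    intro x hx y hy
    have hxρ : dist x z < ρ₀ := lt_of_lt_of_le (mem_ball.1 hx) (min_le_left _ _)
    have hxε : dist x z < ε/2 := lt_of_lt_of_le (mem_ball.1 hx) (min_le_right _ _)
    have h1 : dist (p.eval x) (p.eval z) < δ₀/2 := hcont x hxρ
    have h2 : y ∈ ball (p.eval z) δ₀ := by
      rw [mem_ball] at hy ⊢
      calc dist y (p.eval z) ≤ dist y (p.eval x) + dist (p.eval x) (p.eval z) :=
            dist_triangle _ _ _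
        _ < δ₀ := by linarith
    obtain ⟨u, hu, hpu⟩ := hball₀ h2
    refine ⟨u, ?_, by rw [← hecoe]; exact hpu⟩
    rw [mem_ball] at *
    calc dist u x ≤ dist u z + dist z x := dist_triangle _ _ _
      _ < ε := by
          have := hu.1
          rw [mem_ball] at this
          rw [dist_comm z x]
          linarith
  choose δf hδf ρf hρf hsub using hloc
  obtain ⟨t, hcover⟩ := hΓ.elim_nhds_subcover' (fun z hz => ball z (ρf z hz))
    (fun z hz => ball_mem_nhds z (hρf z hz))
  rcases t.eq_empty_or_nonempty with hte | htne
  · refine ⟨1, one_pos, fun z hz => ?_⟩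
    exfalso
    have := hcover hz
    simp [hte] at this
  · refine ⟨t.inf' htne (fun x => δf x.1 x.2), ?_, ?_⟩
    · rw [gt_iff_lt, Finset.lt_inf'_iff]
      intro x _
      exact hδf x.1 x.2
    · intro z hz
      have := hcover hz
      simp only [Set.mem_iUnion] at this
      obtain ⟨x, hxt, hxball⟩ := this
      intro y hy
      apply hsub x.1 x.2 z hxball
      rw [mem_ball] at hy ⊢
      exact lt_of_lt_of_le hy (Finset.inf'_le _ hxt)

lemma sub_C_ne (hdeg : 1 ≤ p.natDegree) (c : ℂ) : p - C c ≠ 0 := by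
  intro h
  have h2 : (p - C c).natDegree = p.natDegree := natDegree_sub_C
  rw [h] at h2; simp only [natDegree_zero] at h2; omega

lemma fiber_finite (hdeg : 1 ≤ p.natDegree) (c : ℂ) :
    {z : ℂ | p.eval z = c}.Finite := by
  apply (Polynomial.finite_setOf_isRoot (sub_C_ne p hdeg c)).subset
  intro z hz
  simp only [mem_setOf_eq] at hz ⊢
  simp [Polynomial.IsRoot, hz]

lemma fiber_nonempty (hdeg : 1 ≤ p.natDegree) (c : ℂ) :
    {z : ℂ | p.eval z = c}.Nonempty := by
  have h1 : 0 < (p - C c).natDegree := by rw [natDegree_sub_C]; omega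
  obtain ⟨z, hz⟩ := IsAlgClosed.exists_root (p - C c) (natDegree_pos_iff_degree_pos.1 h1).ne'
  refine ⟨z, ?_⟩
  simpa [Polynomial.IsRoot, sub_eq_zero] using hz

lemma preimage_bounded (hdeg : 1 ≤ p.natDegree) (C : ℝ) :
    ∃ K : Set ℂ, IsCompact K ∧ {z : ℂ | ‖p.eval z‖ ≤ C} ⊆ K := by
  have hdp : 0 < degree p := natDegree_pos_iff_degree_pos.1 (by omega)
  have ht : Tendsto (fun z : ℂ => ‖p.eval z‖) (cocompact ℂ) atTop :=
    p.tendsto_norm_atTop hdp tendsto_norm_cocompact_atTop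
  have h2 : {z : ℂ | C < ‖p.eval z‖} ∈ cocompact ℂ := ht.eventually (eventually_gt_atTop C)
  obtain ⟨K, hK, hKs⟩ := mem_cocompact.1 h2
  refine ⟨K, hK, fun z hz => ?_⟩
  by_contra h
  have := hKs h
  simp only [mem_setOf_eq] at this hz
  linarith

lemma exists_sep {F : Set ℂ} (hF : F.Finite) :
    ∃ η > 0, ∀ x ∈ F, ∀ y ∈ F, dist x y < η → x = y := by
  classical
  set T : Finset (ℂ × ℂ) :=
    (hF.toFinset ×ˢ hF.toFinset).filter (fun q => q.1 ≠ q.2) with hT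
  by_cases hTne : T.Nonempty
  · refine ⟨T.inf' hTne (fun q => dist q.1 q.2), ?_, ?_⟩
    · rw [gt_iff_lt, Finset.lt_inf'_iff]
      rintro ⟨x, y⟩ hxy
      simp only [hT, Finset.mem_filter, Finset.mem_product] at hxy
      exact dist_pos.2 hxy.2
    · intro x hx y hy hd
      by_contra hne
      have hmem : (x, y) ∈ T := by
        simp only [hT, Finset.mem_filter, Finset.mem_product, Set.Finite.mem_toFinset]
        exact ⟨⟨hx, hy⟩, hne⟩
      exact absurd (Finset.inf'_le (fun q => dist q.1 q.2) hmem) (not_le.2 hd)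
  · refine ⟨1, one_pos, fun x hx y hy _ => ?_⟩
    by_contra hne
    exact hTne ⟨(x, y), by
      simp only [hT, Finset.mem_filter, Finset.mem_product, Set.Finite.mem_toFinset]
      exact ⟨⟨hx, hy⟩, hne⟩⟩

/-- Unique lifting along a path avoiding critical values. -/
lemma unique_lift {b : ℝ} {γ M₁ M₂ : ℝ → ℂ}
    (hγ : ∀ t ∈ Icc 0 b, ∀ z : ℂ, p.eval z = γ t → (derivative p).eval z ≠ 0)
    (h1 : ContinuousOn M₁ (Icc 0 b)) (h2 : ContinuousOn M₂ (Icc 0 b))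
    (e1 : ∀ t ∈ Icc 0 b, p.eval (M₁ t) = γ t) (e2 : ∀ t ∈ Icc 0 b, p.eval (M₂ t) = γ t)
    (h0 : M₁ 0 = M₂ 0) : EqOn M₁ M₂ (Icc 0 b) := by
  rcases lt_or_ge b 0 with hb | hb
  · intro t ht
    rw [Icc_eq_empty (by linarith)] at ht
    exact absurd ht (notMem_empty t)
  haveI : PreconnectedSpace (Icc (0:ℝ) b) := Subtype.preconnectedSpace isPreconnected_Icc
  set A : Set (Icc (0:ℝ) b) := {x | M₁ x = M₂ x} with hA
  have hclosed : IsClosed A :=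
    isClosed_eq (h1.restrict) (h2.restrict)
  have hopen : IsOpen A := by
    rw [isOpen_iff_mem_nhds]
    intro x hx
    have hx' : M₁ (x : ℝ) = M₂ (x : ℝ) := hx
    have hpd : (derivative p).eval (M₁ (x : ℝ)) ≠ 0 :=
      hγ x x.2 _ (e1 x x.2)
    obtain ⟨ε, hε, hinj⟩ := uniform_inj p isCompact_singleton
      (fun z hz => by rw [mem_singleton_iff] at hz; rw [hz]; exact hpd)
    have hinj' := hinj (M₁ (x:ℝ)) (mem_singleton _)
    have hc1 : ContinuousAt (fun y : Icc (0:ℝ) b => M₁ y) x := h1.restrict.continuousAt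
    have hc2 : ContinuousAt (fun y : Icc (0:ℝ) b => M₂ y) x := h2.restrict.continuousAt
    have hb1 : ∀ᶠ y : Icc (0:ℝ) b in 𝓝 x, M₁ (y:ℝ) ∈ ball (M₁ (x:ℝ)) ε :=
      hc1 (ball_mem_nhds _ hε)
    have hb2 : ∀ᶠ y : Icc (0:ℝ) b in 𝓝 x, M₂ (y:ℝ) ∈ ball (M₁ (x:ℝ)) ε := by
      have := hc2 (ball_mem_nhds (M₂ (x:ℝ)) hε)
      rw [← hx'] at this
      exact this
    filter_upwards [hb1, hb2] with y hy1 hy2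
    exact hinj' hy1 hy2 (by simp only [(e1 y y.2), (e2 y y.2)])
  have hne : A.Nonempty := ⟨⟨0, by constructor <;> [exact le_refl 0; exact hb]⟩, h0⟩
  have := IsClopen.eq_univ ⟨hclosed, hopen⟩ hne
  intro t ht
  have : (⟨t, ht⟩ : Icc (0:ℝ) b) ∈ A := by rw [this]; trivial
  exact this

/-- Path lifting along a path avoiding critical values. -/
lemma path_lift (hdeg : 1 ≤ p.natDegree) {γ : ℝ → ℂ} (hγc : ContinuousOn γ (Icc 0 1))
    (hγ : ∀ t ∈ Icc 0 1, ∀ z : ℂ, p.eval z = γ t → (derivative p).eval z ≠ 0)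
    {z₀ : ℂ} (hz₀ : p.eval z₀ = γ 0) :
    ∃ M : ℝ → ℂ, ContinuousOn M (Icc 0 1) ∧ M 0 = z₀ ∧
      ∀ t ∈ Icc 0 1, p.eval (M t) = γ t := by
  classical
  set S : Set ℝ := {b | b ∈ Icc (0:ℝ) 1 ∧ ∃ M : ℝ → ℂ, ContinuousOn M (Icc 0 b) ∧
    M 0 = z₀ ∧ ∀ t ∈ Icc 0 b, p.eval (M t) = γ t} with hSdef
  have h0S : (0:ℝ) ∈ S := by
    refine ⟨⟨le_refl 0, zero_le_one⟩, fun _ => z₀, continuousOn_const, rfl, ?_⟩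
    intro t ht
    rw [mem_Icc] at ht
    have : t = 0 := le_antisymm ht.2 ht.1
    rw [this, hz₀]
  have hbdd : BddAbove S := ⟨1, fun b hb => hb.1.2⟩
  have hSne : S.Nonempty := ⟨0, h0S⟩
  set s := sSup S with hsdef
  have hs0 : 0 ≤ s := le_csSup hbdd h0S
  have hs1 : s ≤ 1 := csSup_le hSne (fun b hb => hb.1.2)
  have hsIcc : s ∈ Icc (0:ℝ) 1 := ⟨hs0, hs1⟩
  have hW : ∀ b ∈ S, ∃ M : ℝ → ℂ, ContinuousOn M (Icc 0 b) ∧ M 0 = z₀ ∧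
      ∀ t ∈ Icc 0 b, p.eval (M t) = γ t := fun b hb => hb.2
  choose W hWc hW0 hWe using hW
  have hIccsub : ∀ b ∈ S, Icc (0:ℝ) b ⊆ Icc (0:ℝ) 1 := fun b hb =>
    Icc_subset_Icc_right hb.1.2
  have hcompat : ∀ b (hb : b ∈ S) b' (hb' : b' ∈ S), b ≤ b' →
      EqOn (W b hb) (W b' hb') (Icc 0 b) := by
    intro b hb b' hb' hbb'
    refine unique_lift p (γ := γ) ?_ (hWc b hb)
      ((hWc b' hb').mono (Icc_subset_Icc_right hbb')) (hWe b hb)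
      (fun t ht => hWe b' hb' t (Icc_subset_Icc_right hbb' ht))
      (by rw [hW0, hW0])
    exact fun t ht z hz => hγ t (hIccsub b hb ht) z hz
  set N : ℝ → ℂ := fun t => if h : ∃ b, b ∈ S ∧ t ≤ b then
    W (Classical.choose h) (Classical.choose_spec h).1 t else z₀ with hNdef
  have hNeq : ∀ b (hb : b ∈ S), EqOn N (W b hb) (Icc 0 b) := by
    intro b hb t ht
    have hex : ∃ b', b' ∈ S ∧ t ≤ b' := ⟨b, hb, ht.2⟩
    simp only [hNdef, dif_pos hex]
    rcases le_total (Classical.choose hex) b with h | h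
    · exact hcompat _ (Classical.choose_spec hex).1 b hb h
        ⟨ht.1, (Classical.choose_spec hex).2⟩
    · exact (hcompat b hb _ (Classical.choose_spec hex).1 h ht).symm
  have hNlift : ∀ b (hb : b ∈ S), ContinuousOn N (Icc 0 b) ∧ N 0 = z₀ ∧
      ∀ t ∈ Icc 0 b, p.eval (N t) = γ t := by
    intro b hb
    refine ⟨(hWc b hb).congr (hNeq b hb), ?_, fun t ht => ?_⟩
    · rw [hNeq b hb ⟨le_refl 0, hb.1.1⟩]; exact hW0 b hb
    · rw [hNeq b hb ht]; exact hWe b hb t ht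
  -- continuity of N on [0, s) and eval identity
  have hexlt : ∀ t, t < s → ∃ b ∈ S, t < b := fun t ht =>
    exists_lt_of_lt_csSup hSne ht
  have hNc : ∀ t ∈ Ico (0:ℝ) s, ContinuousWithinAt N (Ico 0 s) t := by
    intro t ht
    obtain ⟨b, hbS, htb⟩ := hexlt t ht.2
    have h1 : ContinuousWithinAt N (Icc 0 b) t := (hNlift b hbS).1 t ⟨ht.1, htb.le⟩
    apply h1.mono_of_mem_nhdsWithin
    apply mem_nhdsWithin.2
    exact ⟨Iio b, isOpen_Iio, htb, by rintro x ⟨hx1, hx2⟩; exact ⟨hx2.1, le_of_lt hx1⟩⟩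
  have hNe : ∀ t ∈ Ico (0:ℝ) s, p.eval (N t) = γ t := by
    intro t ht
    obtain ⟨b, hbS, htb⟩ := hexlt t ht.2
    exact (hNlift b hbS).2.2 t ⟨ht.1, htb.le⟩
  have hN0 : N 0 = z₀ := (hNlift 0 h0S).2.1
  -- s ∈ S
  have hsS : s ∈ S := by
    rcases eq_or_lt_of_le hs0 with heq | hslt
    · exact heq ▸ h0S
    · set F := {z : ℂ | p.eval z = γ s} with hFdef
      have hFfin : F.Finite := fiber_finite p hdeg (γ s)
      have hFne : F.Nonempty := fiber_nonempty p hdeg (γ s)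
      obtain ⟨η, hη, hsep⟩ := exists_sep hFfin
      obtain ⟨C, hC⟩ : ∃ C, ∀ t ∈ Icc (0:ℝ) 1, ‖γ t‖ ≤ C := by
        obtain ⟨C, hC⟩ := isCompact_Icc.exists_bound_of_continuousOn hγc
        exact ⟨C, fun t ht => by have := hC t ht; exact this⟩
      obtain ⟨K, hKc, hKsub⟩ := preimage_bounded p hdeg C
      have hIcoIcc : Ico (0:ℝ) s ⊆ Icc (0:ℝ) 1 := fun x hx => ⟨hx.1, le_trans hx.2.le hs1⟩
      have hNK : ∀ t ∈ Ico (0:ℝ) s, N t ∈ K := by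
        intro t ht
        apply hKsub
        rw [mem_setOf_eq, hNe t ht]
        exact hC t (hIcoIcc ht)
      have hi : ∀ ε : ℝ, 0 < ε → ∃ t₀ ∈ Ico (0:ℝ) s, ∀ t ∈ Ico t₀ s,
          Metric.infDist (N t) F < ε := by
        intro ε hε
        by_contra hcon
        push_neg at hcon
        have hseq : ∀ k : ℕ, ∃ t, t ∈ Ico (max 0 (s - 1/(k+1:ℝ))) s ∧
            ε ≤ Metric.infDist (N t) F := by
          intro k
          have hmem : max 0 (s - 1/(k+1:ℝ)) ∈ Ico (0:ℝ) s := by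
            constructor
            · exact le_max_left _ _
            · apply max_lt hslt
              have h0 : 0 < 1/(k+1:ℝ) := by positivity
              linarith
          obtain ⟨t, ht, hinf⟩ := hcon _ hmem
          exact ⟨t, ht, hinf⟩
        choose u hu hinfu using hseq
        have hu_mem : ∀ k, u k ∈ Ico (0:ℝ) s := fun k =>
          ⟨le_trans (le_max_left _ _) (hu k).1, (hu k).2⟩
        have hu_tend : Tendsto u atTop (𝓝 s) := by
          have hle1 : ∀ k : ℕ, s - 1/(k+1:ℝ) ≤ u k := fun k =>
            le_trans (le_max_right _ _) (hu k).1
          have hle2 : ∀ k : ℕ, u k ≤ s := fun k => ((hu k).2).le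
          have h1 : Tendsto (fun k : ℕ => s - 1/(k+1:ℝ)) atTop (𝓝 s) := by
            have h2 := Filter.Tendsto.const_sub s tendsto_one_div_add_atTop_nhds_zero_nat
            simpa using h2
          exact tendsto_of_tendsto_of_tendsto_of_le_of_le h1 tendsto_const_nhds hle1 hle2
        obtain ⟨zlim, hzlimK, φ, hφmono, hφtend⟩ :=
          hKc.tendsto_subseq (fun k => hNK _ (hu_mem k))
        have huφ : Tendsto (u ∘ φ) atTop (𝓝 s) := hu_tend.comp hφmono.tendsto_atTop
        have h2 : Tendsto (fun k => p.eval (N (u (φ k)))) atTop (𝓝 (p.eval zlim)) :=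
          ((continuous_pe p).continuousAt.tendsto).comp hφtend
        have h3 : Tendsto (fun k => γ (u (φ k))) atTop (𝓝 (γ s)) := by
          have h5 : Tendsto (u ∘ φ) atTop (𝓝[Icc 0 1] s) :=
            tendsto_nhdsWithin_of_tendsto_nhds_of_eventually_within _ huφ
              (Eventually.of_forall (fun k => hIcoIcc (hu_mem (φ k))))
          exact (hγc s hsIcc).tendsto.comp h5
        have h4 : (fun k => p.eval (N (u (φ k)))) = fun k => γ (u (φ k)) := by
          funext k; exact hNe _ (hu_mem (φ k))
        rw [h4] at h2
        have hzF : zlim ∈ F := show p.eval zlim = γ s from tendsto_nhds_unique h2 h3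
        have h6 : Tendsto (fun k => Metric.infDist (N (u (φ k))) F) atTop
            (𝓝 (Metric.infDist zlim F)) :=
          ((continuous_infDist_pt F).continuousAt.tendsto).comp hφtend
        rw [Metric.infDist_zero_of_mem hzF] at h6
        have h7 : ∀ᶠ k in atTop, Metric.infDist (N (u (φ k))) F < ε :=
          h6.eventually (Filter.Tendsto.eventually_lt_const hε tendsto_id)
        obtain ⟨k, hk⟩ := h7.exists
        exact absurd hk (not_lt.2 (hinfu (φ k)))
      set ε₀ := η/3 with hε₀def
      have hε₀ : 0 < ε₀ := by positivity
      obtain ⟨t₀, ht₀, hnear⟩ := hi ε₀ hε₀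
      have hnp : ∀ t ∈ Ico t₀ s, ∃ w ∈ F, dist (N t) w < ε₀ := fun t ht =>
        (Metric.infDist_lt_iff hFne).1 (hnear t ht)
      obtain ⟨wstar, hwF, hwd⟩ := hnp t₀ ⟨le_refl t₀, ht₀.2⟩
      have hIcot₀ : Ico t₀ s ⊆ Ico (0:ℝ) s := fun x hx => ⟨le_trans ht₀.1 hx.1, hx.2⟩
      have hkey : ∀ t ∈ Ico t₀ s, dist (N t) wstar ≤ ε₀ → dist (N t) wstar < ε₀ := by
        intro t ht hle
        obtain ⟨w, hwF', hwd'⟩ := hnp t ht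
        have heqw : w = wstar := by
          apply hsep w hwF' wstar hwF
          calc dist w wstar ≤ dist w (N t) + dist (N t) wstar := dist_triangle _ _ _
            _ < η := by rw [dist_comm w (N t)]; rw [hε₀def] at hwd' hle; linarith
        rw [← heqw]; exact hwd'
      haveI : PreconnectedSpace (Ico t₀ s) := Subtype.preconnectedSpace isPreconnected_Ico
      have hNrco : ContinuousOn N (Ico t₀ s) := fun x hx =>
        ((hNc x (hIcot₀ hx)).mono hIcot₀)
      set A : Set (Ico t₀ s) := {x | dist (N x) wstar < ε₀} with hAdef
      have hAopen : IsOpen A :=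
        isOpen_lt (hNrco.restrict.dist continuous_const) continuous_const
      have hAeq : A = {x : Ico t₀ s | dist (N x) wstar ≤ ε₀} := by
        ext x
        simp only [hAdef, mem_setOf_eq]
        exact ⟨le_of_lt, fun h => hkey x x.2 h⟩
      have hAclosed : IsClosed A := by
        rw [hAeq]
        exact isClosed_le (hNrco.restrict.dist continuous_const) continuous_const
      have hAne : A.Nonempty := ⟨⟨t₀, le_refl _, ht₀.2⟩, hwd⟩
      have hAuniv := IsClopen.eq_univ ⟨hAclosed, hAopen⟩ hAne
      have hconst : ∀ t ∈ Ico t₀ s, dist (N t) wstar < ε₀ := by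
        intro t ht
        have hm : (⟨t, ht⟩ : Ico t₀ s) ∈ A := by rw [hAuniv]; trivial
        exact hm
      have hlim : Tendsto N (𝓝[Ico (0:ℝ) s] s) (𝓝 wstar) := by
        rw [Metric.tendsto_nhds]
        intro ε hε
        obtain ⟨t₁, ht₁, hnear₁⟩ := hi (min ε ε₀) (lt_min hε hε₀)
        have hmem : Ico (0:ℝ) s ∩ Ioi (max t₀ t₁) ∈ 𝓝[Ico (0:ℝ) s] s :=
          inter_mem_nhdsWithin _ (Ioi_mem_nhds (max_lt ht₀.2 ht₁.2))
        filter_upwards [hmem] with x hx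
        obtain ⟨hx1, hx2⟩ := hx
        have hxt₀ : x ∈ Ico t₀ s := ⟨le_of_lt (lt_of_le_of_lt (le_max_left _ _) hx2), hx1.2⟩
        have hxt₁ : x ∈ Ico t₁ s := ⟨le_of_lt (lt_of_le_of_lt (le_max_right _ _) hx2), hx1.2⟩
        obtain ⟨w, hwF', hwd'⟩ := (Metric.infDist_lt_iff hFne).1 (hnear₁ x hxt₁)
        have heqw : w = wstar := by
          apply hsep w hwF' wstar hwF
          have h10 := hconst x hxt₀
          have h11 : dist (N x) w < ε₀ := lt_of_lt_of_le hwd' (min_le_right _ _)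
          calc dist w wstar ≤ dist w (N x) + dist (N x) wstar := dist_triangle _ _ _
            _ < η := by rw [dist_comm w (N x)]; rw [hε₀def] at h10 h11; linarith
        rw [← heqw]
        exact lt_of_lt_of_le hwd' (min_le_left _ _)
      set Mh : ℝ → ℂ := fun t => if t < s then N t else wstar with hMhdef
      have hMh_lt : ∀ x, x < s → Mh x = N x := fun x hx => by simp [hMhdef, hx]
      have hMh_s : Mh s = wstar := by simp [hMhdef]
      refine ⟨hsIcc, Mh, ?_, ?_, ?_⟩
      · -- continuity
        intro t ht
        rcases lt_or_eq_of_le ht.2 with htl | hte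
        · have hIcomem : Ico (0:ℝ) s ∈ 𝓝[Icc 0 s] t :=
            mem_nhdsWithin.2 ⟨Iio s, isOpen_Iio, htl, fun x hx => ⟨hx.2.1, hx.1⟩⟩
          have h9 : ContinuousWithinAt N (Icc 0 s) t :=
            (hNc t ⟨ht.1, htl⟩).mono_of_mem_nhdsWithin hIcomem
          apply ContinuousWithinAt.congr_of_eventuallyEq h9 ?_ (hMh_lt t htl)
          filter_upwards [mem_nhdsWithin_of_mem_nhds (Iio_mem_nhds htl)] with x hx
          exact hMh_lt x hx
        · rw [hte]
          have hsplit : Icc (0:ℝ) s = Ico 0 s ∪ {s} := (Ico_union_right hs0).symm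
          unfold ContinuousWithinAt
          rw [hsplit, nhdsWithin_union, hMh_s]
          rw [tendsto_sup]
          constructor
          · apply Tendsto.congr' ?_ hlim
            filter_upwards [self_mem_nhdsWithin] with x hx
            exact (hMh_lt x hx.2).symm
          · rw [nhdsWithin_singleton]
            have := tendsto_pure_nhds Mh s
            rwa [hMh_s] at this
      · rw [hMh_lt 0 hslt]; exact hN0
      · intro t ht
        rcases lt_or_eq_of_le ht.2 with htl | hte
        · rw [hMh_lt t htl]; exact hNe t ⟨ht.1, htl⟩
        · rw [hte, hMh_s]; exact hwF
  -- if s < 1, extend, contradiction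
  rcases eq_or_lt_of_le hs1 with hseq | hslt1
  · obtain ⟨_, M, hMc, hM0, hMe⟩ := hsS
    rw [hseq] at hMc hMe
    exact ⟨M, hMc, hM0, hMe⟩
  · exfalso
    obtain ⟨_, Ms, hMsc, hMs0, hMse⟩ := hsS
    have hpzs : p.eval (Ms s) = γ s := hMse s ⟨hs0, le_refl s⟩
    have hdz : (derivative p).eval (Ms s) ≠ 0 := hγ s hsIcc _ hpzs
    have h := (p.hasStrictDerivAt (Ms s)).hasStrictFDerivAt_equiv hdz
    set e := h.toOpenPartialHomeomorph _ with hedef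
    have hecoe : (e : ℂ → ℂ) = fun x => p.eval x := h.toOpenPartialHomeomorph_coe
    have hzsrc : Ms s ∈ e.source := h.mem_toOpenPartialHomeomorph_source
    have htgt : γ s ∈ e.target := by
      have h2 := e.map_source hzsrc
      rw [hecoe] at h2
      simp only at h2
      rwa [hpzs] at h2
    have h7 : γ ⁻¹' e.target ∈ 𝓝[Icc (0:ℝ) 1] s :=
      (hγc s hsIcc).tendsto (e.open_target.mem_nhds htgt)
    obtain ⟨U, hUopen, hsU, hUsub⟩ := mem_nhdsWithin.1 h7
    obtain ⟨δ, hδ, hballU⟩ := Metric.isOpen_iff.1 hUopen s hsU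
    set b' := min (s + δ/2) 1 with hb'def
    have hb's : s < b' := lt_min (by linarith) hslt1
    have hb'1 : b' ≤ 1 := min_le_right _ _
    have hb'0 : 0 ≤ b' := le_trans hs0 hb's.le
    have htgt' : ∀ t, s < t → t ≤ b' → γ t ∈ e.target := by
      intro t h1 h2
      apply hUsub
      constructor
      · apply hballU
        have h3 : t - s ≤ δ/2 := by
          have := le_trans h2 (min_le_left _ _); linarith
        rw [mem_ball, Real.dist_eq, abs_of_pos (by linarith)]
        linarith
      · exact ⟨le_trans hs0 h1.le, le_trans h2 hb'1⟩
    set M' : ℝ → ℂ := fun t => if t ≤ s then Ms t else e.symm (γ t) with hM'def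
    have hM'le : ∀ x, x ≤ s → M' x = Ms x := fun x hx => by simp [hM'def, hx]
    have hM'gt : ∀ x, s < x → M' x = e.symm (γ x) := fun x hx => by
      simp [hM'def, not_le.2 hx]
    have hsymm_s : e.symm (γ s) = Ms s := by
      rw [← hpzs]
      have h2 : p.eval (Ms s) = e (Ms s) := by rw [hecoe]
      rw [h2]
      exact e.left_inv hzsrc
    have hevsymm : ∀ t, s < t → t ≤ b' → p.eval (e.symm (γ t)) = γ t := by
      intro t h1 h2
      have h3 := e.right_inv (htgt' t h1 h2)
      rw [hecoe] at h3
      exact h3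
    have hb'S : b' ∈ S := by
      refine ⟨⟨hb'0, hb'1⟩, M', ?_, ?_, ?_⟩
      · intro t ht
        rcases lt_trichotomy t s with htl | hte | htg
        · have hIccmem : Icc (0:ℝ) s ∈ 𝓝[Icc 0 b'] t :=
            mem_nhdsWithin.2 ⟨Iio s, isOpen_Iio, htl, fun x hx => ⟨hx.2.1, hx.1.le⟩⟩
          have h9 : ContinuousWithinAt Ms (Icc 0 b') t :=
            (hMsc t ⟨ht.1, htl.le⟩).mono_of_mem_nhdsWithin hIccmem
          apply ContinuousWithinAt.congr_of_eventuallyEq h9 ?_ (hM'le t htl.le)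
          filter_upwards [mem_nhdsWithin_of_mem_nhds (Iio_mem_nhds htl)] with x hx
          exact hM'le x hx.le
        · rw [hte]
          have hsplit : Icc (0:ℝ) b' = Icc 0 s ∪ Icc s b' :=
            (Icc_union_Icc_eq_Icc hs0 hb's.le).symm
          unfold ContinuousWithinAt
          rw [hsplit, nhdsWithin_union, tendsto_sup, hM'le s (le_refl s)]
          constructor
          · apply Tendsto.congr' ?_ ((hMsc s ⟨hs0, le_refl s⟩) :
              Tendsto Ms (𝓝[Icc 0 s] s) (𝓝 (Ms s)))
            filter_upwards [self_mem_nhdsWithin] with x hx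
            exact (hM'le x hx.2).symm
          · have hT : Tendsto (fun x => e.symm (γ x)) (𝓝[Icc s b'] s) (𝓝 (Ms s)) := by
              have hc : ContinuousAt e.symm (γ s) := e.continuousAt_symm htgt
              have hγ' : ContinuousWithinAt γ (Icc s b') s :=
                (hγc s hsIcc).mono (fun x hx => ⟨le_trans hs0 hx.1, le_trans hx.2 hb'1⟩)
              have h8 := hc.comp_continuousWithinAt hγ'
              unfold ContinuousWithinAt at h8
              simp only [Function.comp] at h8
              rwa [hsymm_s] at h8
            apply Tendsto.congr' ?_ hT
            filter_upwards [self_mem_nhdsWithin] with x hx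
            rcases eq_or_lt_of_le hx.1 with h1 | h1
            · rw [← h1, hsymm_s, hM'le s (le_refl s)]
            · rw [hM'gt x h1]
        · have h9 : ContinuousWithinAt (fun x => e.symm (γ x)) (Icc 0 b') t := by
            have hc : ContinuousAt e.symm (γ t) := e.continuousAt_symm (htgt' t htg ht.2)
            have hγ' : ContinuousWithinAt γ (Icc 0 b') t :=
              (hγc t ⟨ht.1, le_trans ht.2 hb'1⟩).mono (Icc_subset_Icc_right hb'1)
            exact hc.comp_continuousWithinAt hγ'
          apply ContinuousWithinAt.congr_of_eventuallyEq h9 ?_ (hM'gt t htg)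
          filter_upwards [mem_nhdsWithin_of_mem_nhds (Ioi_mem_nhds htg)] with x hx
          exact hM'gt x hx
      · rw [hM'le 0 hs0]; exact hMs0
      · intro t ht
        rcases le_or_gt t s with h1 | h1
        · rw [hM'le t h1]; exact hMse t ⟨ht.1, h1⟩
        · rw [hM'gt t h1]; exact hevsymm t h1 ht.2
    have hle := le_csSup hbdd hb'S
    exact absurd hle (not_le.2 hb's)

/-- Stability: a lift of a uniformly close path starting at the same point stays close. -/
lemma lift_stability {Λ : ℝ → ℂ} (hΛc : ContinuousOn Λ (Icc 0 1))
    (hΛ : ∀ t ∈ Icc 0 1, (derivative p).eval (Λ t) ≠ 0) {ε : ℝ} (hε : 0 < ε) :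
    ∃ δ > 0, ∀ τ M : ℝ → ℂ, ContinuousOn M (Icc 0 1) →
      (∀ t ∈ Icc 0 1, p.eval (M t) = τ t) → M 0 = Λ 0 →
      (∀ t ∈ Icc 0 1, dist (τ t) (p.eval (Λ t)) < δ) →
      ∀ t ∈ Icc 0 1, dist (M t) (Λ t) < ε := by
  have hΓc : IsCompact (Λ '' Icc 0 1) := isCompact_Icc.image_of_continuousOn hΛc
  have hd : ∀ z ∈ Λ '' Icc 0 1, (derivative p).eval z ≠ 0 := by
    rintro z ⟨t, ht, rfl⟩; exact hΛ t ht
  obtain ⟨ε₁, hε₁, hinj⟩ := uniform_inj p hΓc hd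
  set ε' := min ε (ε₁/2) with hε'def
  have hε' : 0 < ε' := lt_min hε (by positivity)
  obtain ⟨δ, hδ, hopen⟩ := uniform_open p hΓc hd hε'
  refine ⟨δ, hδ, ?_⟩
  intro τ M hMc hMτ hM0 hclose
  suffices H : ∀ t ∈ Icc (0:ℝ) 1, dist (M t) (Λ t) < ε' by
    intro t ht; exact lt_of_lt_of_le (H t ht) (min_le_left _ _)
  have key : ∀ t ∈ Icc (0:ℝ) 1, dist (M t) (Λ t) ≤ ε' → dist (M t) (Λ t) < ε' := by
    intro t ht hle
    have h1 : τ t ∈ ball (p.eval (Λ t)) δ := mem_ball.2 (hclose t ht)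
    obtain ⟨w, hw, hpw⟩ := hopen (Λ t) ⟨t, ht, rfl⟩ h1
    have h2 : M t ∈ ball (Λ t) ε₁ := by
      rw [mem_ball]
      have : ε' ≤ ε₁/2 := min_le_right _ _
      linarith
    have h3 : w ∈ ball (Λ t) ε₁ := by
      rw [mem_ball] at hw ⊢
      have : ε' ≤ ε₁/2 := min_le_right _ _
      linarith
    have hpw' : p.eval w = τ t := hpw
    have h4 : M t = w := hinj (Λ t) ⟨t, ht, rfl⟩ h2 h3 (by
      show p.eval (M t) = p.eval w
      rw [hMτ t ht, hpw'])
    rw [h4]; exact mem_ball.1 hw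
  haveI : PreconnectedSpace (Icc (0:ℝ) 1) := Subtype.preconnectedSpace isPreconnected_Icc
  set A : Set (Icc (0:ℝ) 1) := {x | dist (M x) (Λ x) < ε'} with hA
  have hAopen : IsOpen A :=
    isOpen_lt (Continuous.dist hMc.restrict hΛc.restrict) continuous_const
  have hAeq : A = {x : Icc (0:ℝ) 1 | dist (M x) (Λ x) ≤ ε'} := by
    ext x
    simp only [hA, mem_setOf_eq]
    constructor
    · exact fun h => le_of_lt h
    · exact fun h => key x x.2 h
  have hAclosed : IsClosed A := by
    rw [hAeq]
    exact isClosed_le (Continuous.dist hMc.restrict hΛc.restrict) continuous_const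
  have hne : A.Nonempty := ⟨⟨0, by constructor <;> norm_num⟩, by
    simp only [hA, mem_setOf_eq, hM0, dist_self]; exact hε'⟩
  have := IsClopen.eq_univ ⟨hAclosed, hAopen⟩ hne
  intro t ht
  have h5 : (⟨t, ht⟩ : Icc (0:ℝ) 1) ∈ A := by rw [this]; trivial
  exact h5

lemma joinedIn_of_fun {s : Set ℂ} {M : ℝ → ℂ} (hM : ContinuousOn M (Icc 0 1))
    (hmem : ∀ t ∈ Icc 0 1, M t ∈ s) {x y : ℂ} (hx : M 0 = x) (hy : M 1 = y) :
    JoinedIn s x y := by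
  refine ⟨⟨⟨fun t => M t, ?_⟩, ?_, ?_⟩, fun t => hmem _ t.2⟩
  · exact hM.comp_continuous continuous_subtype_val (fun a => a.2)
  · simpa using hx
  · simpa using hy

/-! The squeezing map pushing the plane into the disk of radius `< 1`, radially. -/

variable (r : ℝ)

def G (w : ℂ) : ℝ :=
  r + (1 - r) * (max (‖w‖) r - r) / (1 + (max (‖w‖) r - r))

def cc (w : ℂ) : ℝ := G r w / max (‖w‖) r

variable {r}

lemma denom_pos (hr : 0 < r) (w : ℂ) : 0 < 1 + (max (‖w‖) r - r) := by
  have : r ≤ max (‖w‖) r := le_max_right _ _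
  linarith

lemma contG (hr : 0 < r) : Continuous (G r) := by
  apply continuous_const.add
  apply Continuous.div
  · exact (continuous_const.mul ((continuous_norm.max continuous_const).sub continuous_const))
  · exact (continuous_const.add ((continuous_norm.max continuous_const).sub continuous_const))
  · intro w; exact (denom_pos hr w).ne'

lemma r_le_G (hr : 0 < r) (hr1 : r < 1) (w : ℂ) : r ≤ G r w := by
  have h1 := denom_pos hr w
  have h2 : r ≤ max (‖w‖) r := le_max_right _ _
  have h3 : 0 ≤ (1 - r) * (max (‖w‖) r - r) / (1 + (max (‖w‖) r - r)) :=
    div_nonneg (mul_nonneg (by linarith) (by linarith)) h1.le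
  simp only [G]; linarith

lemma G_lt_one (hr : 0 < r) (hr1 : r < 1) (w : ℂ) : G r w < 1 := by
  set d := max (‖w‖) r - r with hd
  have hd0 : 0 ≤ d := sub_nonneg.2 (le_max_right _ _)
  have h1 : (0:ℝ) < 1 + d := by linarith
  have h2 : d / (1 + d) < 1 := (div_lt_one h1).2 (by linarith)
  have h3 : (1 - r) * (d / (1 + d)) < (1 - r) * 1 :=
    mul_lt_mul_of_pos_left h2 (by linarith)
  have : G r w = r + (1 - r) * (d / (1 + d)) := by simp only [G, ← hd, mul_div_assoc]
  rw [this]; linarith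

lemma G_le_max (hr : 0 < r) (hr1 : r < 1) (w : ℂ) : G r w ≤ max (‖w‖) r := by
  set d := max (‖w‖) r - r with hd
  have hd0 : 0 ≤ d := sub_nonneg.2 (le_max_right _ _)
  have h1 : (0:ℝ) < 1 + d := by linarith
  have h2 : d / (1 + d) ≤ d := div_le_self hd0 (by linarith)
  have h3 : (1 - r) * (d / (1 + d)) ≤ 1 * (d / (1 + d)) :=
    mul_le_mul_of_nonneg_right (by linarith) (div_nonneg hd0 h1.le)
  have h4 : G r w = r + (1 - r) * (d / (1 + d)) := by simp only [G, ← hd, mul_div_assoc]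
  have : max (‖w‖) r = r + d := by simp [hd]
  rw [h4, this]; nlinarith

lemma max_pos (hr : 0 < r) (w : ℂ) : 0 < max (‖w‖) r := lt_of_lt_of_le hr (le_max_right _ _)

lemma cc_pos (hr : 0 < r) (hr1 : r < 1) (w : ℂ) : 0 < cc r w :=
  div_pos (lt_of_lt_of_le hr (r_le_G hr hr1 w)) (max_pos hr w)

lemma cc_le_one (hr : 0 < r) (hr1 : r < 1) (w : ℂ) : cc r w ≤ 1 :=
  (div_le_one (max_pos hr w)).2 (G_le_max hr hr1 w)

lemma cc_eq_one {w : ℂ} (hr : 0 < r) (h : ‖w‖ ≤ r) : cc r w = 1 := by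
  have hm : max (‖w‖) r = r := max_eq_right h
  have hG : G r w = r := by simp [G, hm]
  rw [cc, hG, hm, div_self hr.ne']

lemma contc (hr : 0 < r) : Continuous (cc r) := by
  apply (contG hr).div
  · exact continuous_norm.max continuous_const
  · intro w; exact (max_pos hr w).ne'

def lam (r s : ℝ) (w : ℂ) : ℝ := (1 - s) + s * cc r w

lemma cc_le_lam (hr : 0 < r) (hr1 : r < 1) {s : ℝ} (hs : s ∈ Icc (0:ℝ) 1) (w : ℂ) :
    cc r w ≤ lam r s w := by
  have h1 : 0 ≤ 1 - s := by linarith [hs.2]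
  have h2 : 0 ≤ 1 - cc r w := by linarith [cc_le_one hr hr1 w]
  have := mul_nonneg h1 h2
  simp only [lam]; nlinarith

lemma lam_le_one (hr : 0 < r) (hr1 : r < 1) {s : ℝ} (hs : s ∈ Icc (0:ℝ) 1) (w : ℂ) :
    lam r s w ≤ 1 := by
  have h1 : 0 ≤ s := hs.1
  have h2 : 0 ≤ 1 - cc r w := by linarith [cc_le_one hr hr1 w]
  have := mul_nonneg h1 h2
  simp only [lam]; nlinarith

lemma lam_pos (hr : 0 < r) (hr1 : r < 1) {s : ℝ} (hs : s ∈ Icc (0:ℝ) 1) (w : ℂ) :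
    0 < lam r s w := lt_of_lt_of_le (cc_pos hr hr1 w) (cc_le_lam hr hr1 hs w)

lemma abs_lam_smul {x : ℝ} (hx : 0 ≤ x) (w : ℂ) :
    ‖(x : ℂ) * w‖ = x * ‖w‖ := by
  rw [norm_mul, Complex.norm_real, Real.norm_eq_abs, _root_.abs_of_nonneg hx]

lemma lam_eq_one_of_abs_le (hr : 0 < r) {w : ℂ} (h : ‖w‖ ≤ r) (s : ℝ) :
    lam r s w = 1 := by simp [lam, cc_eq_one hr h]

/-- scaled points avoid a set of "critical values" inside the disk of radius r. -/
lemma lam_smul_avoid {CVs : Set ℂ} (hr : 0 < r) (hr1 : r < 1)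
    (hCV : ∀ c ∈ CVs, ‖c‖ < r) {s : ℝ} (hs : s ∈ Icc (0:ℝ) 1)
    {w : ℂ} (hw : w ∉ CVs) : ((lam r s w : ℝ) : ℂ) * w ∉ CVs := by
  by_cases habs : ‖w‖ ≤ r
  · rw [lam_eq_one_of_abs_le hr habs]; simpa using hw
  · push_neg at habs
    intro hmem
    have h1 := hCV _ hmem
    have h2 : ‖((lam r s w : ℝ) : ℂ) * w‖ = lam r s w * ‖w‖ :=
      abs_lam_smul (lam_pos hr hr1 hs w).le w
    have hmax : max (‖w‖) r = ‖w‖ := max_eq_left habs.le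
    have h3 : cc r w * ‖w‖ = G r w := by
      rw [cc, hmax, div_mul_cancel₀ _ (by linarith : ‖w‖ ≠ 0)]
    have h4 : r ≤ lam r s w * ‖w‖ := by
      have := mul_le_mul_of_nonneg_right (cc_le_lam hr hr1 hs w) (by linarith : (0:ℝ) ≤ ‖w‖)
      have := r_le_G hr hr1 w
      linarith
    rw [h2] at h1; linarith

lemma abs_cc_smul_lt_one (hr : 0 < r) (hr1 : r < 1) (w : ℂ) :
    ‖((cc r w : ℝ) : ℂ) * w‖ < 1 := by
  rw [abs_lam_smul (cc_pos hr hr1 w).le]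
  have h1 : cc r w * ‖w‖ ≤ cc r w * max (‖w‖) r :=
    mul_le_mul_of_nonneg_left (le_max_left _ _) (cc_pos hr hr1 w).le
  have h2 : cc r w * max (‖w‖) r = G r w := by
    rw [cc, div_mul_cancel₀ _ (max_pos hr w).ne']
  have := G_lt_one hr hr1 w
  linarith

end
end Stmt12Aux

open Stmt12Aux in
/-- If all critical values of a polynomial `p` of degree `n ≥ 1` lie in
the open unit disk, then the sublevel set `D_p = {z : |p(z)| < 1}` is connected. -/
theorem stmt12 (p : Polynomial ℂ) (hdeg : 1 ≤ p.natDegree)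
    (hcrit : ∀ w : ℂ, (Polynomial.derivative p).eval w = 0 → ‖p.eval w‖ < 1) :
    IsConnected {z : ℂ | ‖p.eval z‖ < 1} := by
  classical
  have hdne : Polynomial.derivative p ≠ 0 := by
    intro h
    have h2 := Polynomial.natDegree_eq_zero_of_derivative_eq_zero h
    omega
  set CVs := (fun z => p.eval z) '' {w | (Polynomial.derivative p).eval w = 0} with hCVs
  have hCVfin : CVs.Finite := (Polynomial.finite_setOf_isRoot hdne).image _
  have hCVlt : ∀ c ∈ CVs, ‖c‖ < 1 := by
    rintro c ⟨w, hw, rfl⟩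
    exact hcrit w hw
  obtain ⟨r, hr0, hr1, hrCV⟩ : ∃ r : ℝ, 0 < r ∧ r < 1 ∧ ∀ c ∈ CVs, ‖c‖ < r := by
    by_cases hne : hCVfin.toFinset.Nonempty
    · set m := hCVfin.toFinset.sup' hne Norm.norm with hm
      have hm1 : m < 1 := by
        rw [hm, Finset.sup'_lt_iff]
        intro c hc
        exact hCVlt c (hCVfin.mem_toFinset.1 hc)
      have hm0 : 0 ≤ m := by
        obtain ⟨c, hc⟩ := hne
        exact le_trans (norm_nonneg _) (Finset.le_sup' _ hc)
      refine ⟨(m+1)/2, by linarith, by linarith, ?_⟩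
      intro c hc
      have := Finset.le_sup' Norm.norm (hCVfin.mem_toFinset.2 hc)
      linarith
    · refine ⟨1/2, by norm_num, by norm_num, ?_⟩
      intro c hc
      exact absurd ⟨c, hCVfin.mem_toFinset.2 hc⟩ hne
  have hAvoid : ∀ y : ℂ, y ∉ CVs → ∀ z : ℂ, p.eval z = y →
      (Polynomial.derivative p).eval z ≠ 0 := by
    intro y hy z hz hd
    exact hy ⟨z, hd, hz⟩
  set Dp := {z : ℂ | ‖p.eval z‖ < 1} with hDp
  have hDpopen : IsOpen Dp := by
    have hc : Continuous fun z : ℂ => ‖p.eval z‖ :=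
      continuous_norm.comp (continuous_pe p)
    exact isOpen_lt hc continuous_const
  have hdense : Dense CVsᶜ := hCVfin.countable.dense_compl ℝ
  obtain ⟨a, haCV, haball⟩ : ∃ a ∈ CVsᶜ, a ∈ ball (0:ℂ) r :=
    hdense.exists_mem_open isOpen_ball ⟨0, mem_ball_self hr0⟩
  have haabs : ‖a‖ < r := by
    rw [mem_ball_zero_iff] at haball
    exact haball
  have haD : ‖a‖ < 1 := lt_trans haabs hr1
  set Fa := {z : ℂ | p.eval z = a} with hFa
  have hFane : Fa.Nonempty := fiber_nonempty p hdeg a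
  have hFafin : Fa.Finite := fiber_finite p hdeg a
  have hFaD : Fa ⊆ Dp := fun z hz => by
    rw [hDp, mem_setOf_eq]
    rw [hFa, mem_setOf_eq] at hz
    rw [hz]; exact haD
  obtain ⟨w₀, hw₀⟩ := hFane
  have hpreCV : ((fun z => p.eval z) ⁻¹' CVs).Countable := by
    have hun : (fun z => p.eval z) ⁻¹' CVs = ⋃ c ∈ CVs, {z | p.eval z = c} := by
      ext z; simp [mem_preimage, mem_iUnion]
    rw [hun]
    exact Set.Countable.biUnion hCVfin.countable
      (fun c _ => (fiber_finite p hdeg c).countable)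
  have hrank : (1 : Cardinal) < Module.rank ℝ ℂ := by
    rw [Complex.rank_real_complex]; exact Nat.one_lt_ofNat
  have hmem0 : (0:ℝ) ∈ Icc (0:ℝ) 1 := ⟨le_refl 0, zero_le_one⟩
  have hmem1 : (1:ℝ) ∈ Icc (0:ℝ) 1 := ⟨zero_le_one, le_refl 1⟩
  -- CLAIM A : any two points of the fiber over `a` are joined in `Dp`.
  have claimA : ∀ z₁ ∈ Fa, ∀ z₂ ∈ Fa, JoinedIn Dp z₁ z₂ := by
    intro z₁ hz₁ z₂ hz₂
    rw [hFa, mem_setOf_eq] at hz₁ hz₂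
    have hz₁' : z₁ ∈ ((fun z => p.eval z) ⁻¹' CVs)ᶜ := by
      intro hmem
      rw [mem_preimage] at hmem
      simp only [hz₁] at hmem
      exact haCV hmem
    have hz₂' : z₂ ∈ ((fun z => p.eval z) ⁻¹' CVs)ᶜ := by
      intro hmem
      rw [mem_preimage] at hmem
      simp only [hz₂] at hmem
      exact haCV hmem
    have hpc : IsPathConnected ((fun z => p.eval z) ⁻¹' CVs)ᶜ :=
      hpreCV.isPathConnected_compl_of_one_lt_rank hrank
    obtain ⟨α, hα⟩ := hpc.joinedIn z₁ hz₁' z₂ hz₂'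
    set β : ℝ → ℂ := fun t => p.eval (α.extend t) with hβ
    have hβc : Continuous β := (continuous_pe p).comp α.continuous_extend
    have hβCV : ∀ t, β t ∉ CVs := by
      intro t
      have h1 : α.extend t ∈ range α := by
        rw [← Path.extend_range]
        exact mem_range_self t
      obtain ⟨u, hu⟩ := h1
      have := hα u
      rw [hu] at this
      exact fun hmem => this hmem
    have hβ0 : β 0 = a := by
      rw [hβ]; simp only [Path.extend_zero, Path.source, hz₁]
    have hβ1 : β 1 = a := by
      rw [hβ]; simp only [Path.extend_one, Path.target, hz₂]
    obtain ⟨Bβ, hBβ⟩ : ∃ B, ∀ t ∈ Icc (0:ℝ) 1, ‖β t‖ ≤ B := by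
      obtain ⟨B, hB⟩ := isCompact_Icc.exists_bound_of_continuousOn hβc.continuousOn
      exact ⟨B, fun t ht => by have := hB t ht; exact this⟩
    have hBβ0 : 0 ≤ Bβ :=
      le_trans (norm_nonneg _) (hBβ 0 hmem0)
    set Kf : ℝ → ℝ → ℂ := fun s t => ((lam r s (β t) : ℝ) : ℂ) * β t with hKf
    have hKcont : ∀ s, Continuous (Kf s) := by
      intro s
      apply Continuous.mul ?_ hβc
      apply Complex.continuous_ofReal.comp
      show Continuous fun t => lam r s (β t)
      simp only [lam]
      exact continuous_const.add (continuous_const.mul ((contc hr0).comp hβc))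
    have hKCV : ∀ s ∈ Icc (0:ℝ) 1, ∀ t, Kf s t ∉ CVs := fun s hs t =>
      lam_smul_avoid hr0 hr1 hrCV hs (hβCV t)
    have hK0 : ∀ s, Kf s 0 = a := by
      intro s
      show ((lam r s (β 0) : ℝ) : ℂ) * β 0 = a
      rw [hβ0, lam_eq_one_of_abs_le hr0 haabs.le]
      simp
    have hK1 : ∀ s, Kf s 1 = a := by
      intro s
      show ((lam r s (β 1) : ℝ) : ℂ) * β 1 = a
      rw [hβ1, lam_eq_one_of_abs_le hr0 haabs.le]
      simp
    have hlift : ∀ s ∈ Icc (0:ℝ) 1, ∃ M : ℝ → ℂ, ContinuousOn M (Icc 0 1) ∧ M 0 = z₁ ∧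
        ∀ t ∈ Icc 0 1, p.eval (M t) = Kf s t := by
      intro s hs
      exact path_lift p hdeg ((hKcont s).continuousOn)
        (fun t _ z hz => hAvoid _ (hKCV s hs t) z hz)
        (by rw [hK0]; exact hz₁)
    choose Mf hMfc hMf0 hMfe using hlift
    obtain ⟨η, hη, hsep⟩ := exists_sep hFafin
    have hMend : ∀ s (hs : s ∈ Icc (0:ℝ) 1), Mf s hs 1 ∈ Fa := by
      intro s hs
      rw [hFa, mem_setOf_eq, hMfe s hs 1 hmem1, hK1]
    have hloc : ∀ s₀ (hs₀ : s₀ ∈ Icc (0:ℝ) 1), ∃ δ > 0, ∀ s (hs : s ∈ Icc (0:ℝ) 1),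
        |s - s₀| < δ → Mf s hs 1 = Mf s₀ hs₀ 1 := by
      intro s₀ hs₀
      have hΛd : ∀ t ∈ Icc (0:ℝ) 1, (Polynomial.derivative p).eval (Mf s₀ hs₀ t) ≠ 0 := by
        intro t ht
        exact hAvoid _ (hKCV s₀ hs₀ t) _ (hMfe s₀ hs₀ t ht)
      obtain ⟨δ', hδ', hstab⟩ := lift_stability p (hMfc s₀ hs₀) hΛd hη
      refine ⟨δ' / (Bβ + 1), by positivity, ?_⟩
      intro s hs hclose
      have hdistK : ∀ t ∈ Icc (0:ℝ) 1, dist (Kf s t) (p.eval (Mf s₀ hs₀ t)) < δ' := by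
        intro t ht
        rw [hMfe s₀ hs₀ t ht]
        have hsub : Kf s t - Kf s₀ t = (((s₀ - s) * (1 - cc r (β t)) : ℝ) : ℂ) * β t := by
          show ((lam r s (β t) : ℝ) : ℂ) * β t - ((lam r s₀ (β t) : ℝ) : ℂ) * β t = _
          simp only [lam]
          push_cast
          ring
        rw [Complex.dist_eq, hsub, norm_mul, Complex.norm_real, Real.norm_eq_abs]
        have h1 : |(s₀ - s) * (1 - cc r (β t))| ≤ |s₀ - s| := by
          rw [abs_mul]
          have h2 : |1 - cc r (β t)| ≤ 1 := by
            rw [abs_le]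
            constructor
            · have := cc_le_one hr0 hr1 (β t); linarith
            · have := cc_pos hr0 hr1 (β t); linarith
          nlinarith [abs_nonneg (s₀ - s)]
        have h3 := hBβ t ht
        have habs0 := norm_nonneg (β t)
        have h4 : |(s₀ - s) * (1 - cc r (β t))| * ‖β t‖ ≤ |s₀ - s| * Bβ :=
          mul_le_mul h1 h3 habs0 (abs_nonneg _)
        have h5 : |s₀ - s| < δ' / (Bβ + 1) := by rwa [abs_sub_comm] at hclose
        have h6 : |s₀ - s| * Bβ < δ' := by
          have h7 : |s₀ - s| * (Bβ + 1) < (δ' / (Bβ + 1)) * (Bβ + 1) :=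
            mul_lt_mul_of_pos_right h5 (by linarith)
          rw [div_mul_cancel₀ _ (by linarith : Bβ + 1 ≠ 0)] at h7
          nlinarith [abs_nonneg (s₀ - s)]
        linarith
      have hst := hstab (Kf s) (Mf s hs) (hMfc s hs) (hMfe s hs)
        (by rw [hMf0, hMf0]) hdistK
      exact hsep _ (hMend s hs) _ (hMend s₀ hs₀) (hst 1 hmem1)
    set E : ℝ → ℂ := fun s => if hs : s ∈ Icc (0:ℝ) 1 then Mf s hs 1 else z₁ with hE
    have hEeq : ∀ s (hs : s ∈ Icc (0:ℝ) 1), E s = Mf s hs 1 := fun s hs => dif_pos hs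
    have hopen' : ∀ x : Icc (0:ℝ) 1, ∃ δ > 0, ∀ y : Icc (0:ℝ) 1,
        |(y:ℝ) - (x:ℝ)| < δ → E y = E x := by
      intro x
      obtain ⟨δ, hδ, hl⟩ := hloc x x.2
      refine ⟨δ, hδ, fun y hy => ?_⟩
      rw [hEeq y y.2, hEeq x x.2]
      exact hl y y.2 hy
    have hnbhd : ∀ (x : Icc (0:ℝ) 1) (δ : ℝ), 0 < δ →
        {y : Icc (0:ℝ) 1 | |(y:ℝ) - (x:ℝ)| < δ} ∈ 𝓝 x := by
      intro x δ hδ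
      have hcont : Continuous (fun y : Icc (0:ℝ) 1 => (y:ℝ)) := continuous_subtype_val
      have hball : Metric.ball (x:ℝ) δ ∈ 𝓝 (x:ℝ) := ball_mem_nhds _ hδ
      have := hcont.continuousAt (x := x) hball
      simpa [Metric.ball, Subtype.dist_eq, Real.dist_eq] using this
    have hE10 : E 1 = E 0 := by
      haveI : PreconnectedSpace (Icc (0:ℝ) 1) := Subtype.preconnectedSpace isPreconnected_Icc
      set A : Set (Icc (0:ℝ) 1) := {x | E x = E 0} with hA
      have hopenA : IsOpen A := by
        rw [isOpen_iff_mem_nhds]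
        intro x hx
        obtain ⟨δ, hδ, hl⟩ := hopen' x
        filter_upwards [hnbhd x δ hδ] with y hy
        show E (y:ℝ) = E 0
        rw [hl y hy]
        exact hx
      have hclosedA : IsClosed A := by
        rw [← isOpen_compl_iff, isOpen_iff_mem_nhds]
        intro x hx
        obtain ⟨δ, hδ, hl⟩ := hopen' x
        filter_upwards [hnbhd x δ hδ] with y hy
        show ¬ (E (y:ℝ) = E 0)
        rw [hl y hy]
        exact hx
      have hne : A.Nonempty := ⟨⟨0, hmem0⟩, rfl⟩
      have huniv := IsClopen.eq_univ ⟨hclosedA, hopenA⟩ hne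
      have h1 : (⟨1, hmem1⟩ : Icc (0:ℝ) 1) ∈ A := by rw [huniv]; trivial
      exact h1
    have hE0 : E 0 = z₂ := by
      have hK0β : ∀ t, Kf 0 t = β t := by
        intro t
        show ((lam r 0 (β t) : ℝ) : ℂ) * β t = β t
        simp [lam]
      have hαlift : ∀ t ∈ Icc (0:ℝ) 1, p.eval (α.extend t) = Kf 0 t := by
        intro t _
        rw [hK0β]
      have hEq := unique_lift p (γ := Kf 0)
        (fun t _ z hz => hAvoid _ (hKCV 0 hmem0 t) z hz)
        (hMfc 0 hmem0) (α.continuous_extend.continuousOn)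
        (hMfe 0 hmem0) hαlift
        (by rw [hMf0, Path.extend_zero])
      rw [hEeq 0 hmem0, hEq hmem1, Path.extend_one]
    have hKD : ∀ t, ‖Kf 1 t‖ < 1 := by
      intro t
      have heq : Kf 1 t = ((cc r (β t) : ℝ):ℂ) * β t := by
        show ((lam r 1 (β t) : ℝ) : ℂ) * β t = _
        simp [lam]
      rw [heq]
      exact abs_cc_smul_lt_one hr0 hr1 (β t)
    have hMD : ∀ t ∈ Icc (0:ℝ) 1, Mf 1 hmem1 t ∈ Dp := by
      intro t ht
      rw [hDp, mem_setOf_eq, hMfe 1 hmem1 t ht]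
      exact hKD t
    have hJ : JoinedIn Dp z₁ (Mf 1 hmem1 1) :=
      joinedIn_of_fun (hMfc 1 hmem1) hMD (hMf0 1 hmem1) rfl
    have hfin : Mf 1 hmem1 1 = z₂ := by
      rw [← hEeq 1 hmem1, hE10, hE0]
    rw [hfin] at hJ
    exact hJ
  -- CLAIM B : every point of Dp is joined in Dp to some point of the fiber over a.
  have claimB : ∀ z ∈ Dp, ∃ w ∈ Fa, JoinedIn Dp z w := by
    intro z hz
    obtain ⟨ρ, hρ, hballD⟩ := Metric.isOpen_iff.1 hDpopen z hz
    have hdense2 : Dense (((fun u => p.eval u) ⁻¹' CVs)ᶜ) := hpreCV.dense_compl ℝ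
    obtain ⟨z', hz'CV, hz'ball⟩ := hdense2.exists_mem_open isOpen_ball ⟨z, mem_ball_self hρ⟩
    have hjoin1 : JoinedIn Dp z z' := by
      have hconv : Convex ℝ (ball z ρ) := convex_ball z ρ
      have hpcball := hconv.isPathConnected ⟨z, mem_ball_self hρ⟩
      exact (hpcball.joinedIn z (mem_ball_self hρ) z' hz'ball).mono hballD
    set y := p.eval z' with hy
    have hyCV : y ∉ CVs := by
      intro hmem
      exact hz'CV (mem_preimage.2 hmem)
    have hz'D : z' ∈ Dp := hballD hz'ball
    have hyD : ‖y‖ < 1 := hz'D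
    have hpc2 : IsPathConnected CVsᶜ :=
      hCVfin.countable.isPathConnected_compl_of_one_lt_rank hrank
    obtain ⟨α', hα'⟩ := hpc2.joinedIn y hyCV a haCV
    set Φ : ℂ → ℂ := fun w => ((cc r w : ℝ):ℂ) * w with hΦ
    have hΦcont : Continuous Φ :=
      (Complex.continuous_ofReal.comp (contc hr0)).mul continuous_id
    have hΦa : Φ a = a := by
      rw [hΦ]
      simp only
      rw [cc_eq_one hr0 haabs.le]
      simp
    have hΦlam : ∀ w, Φ w = ((lam r 1 w : ℝ):ℂ) * w := by
      intro w
      simp [hΦ, lam]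
    set P1 : Path y (Φ y) :=
      { toFun := fun t => ((lam r (t:ℝ) y : ℝ):ℂ) * y
        continuous_toFun := by
          apply Continuous.mul ?_ continuous_const
          apply Complex.continuous_ofReal.comp
          show Continuous fun t : unitInterval => lam r (t:ℝ) y
          simp only [lam]
          exact (continuous_const.sub continuous_subtype_val).add
            (continuous_subtype_val.mul continuous_const)
        source' := by simp [lam]
        target' := by rw [hΦlam]; simp } with hP1
    set P2 : Path (Φ y) a :=
      { toFun := fun t => Φ (α' t)
        continuous_toFun := hΦcont.comp α'.continuous
        source' := by simp
        target' := by simp [hΦa] } with hP2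
    set P := P1.trans P2 with hP
    have hPrange : ∀ u : unitInterval, ‖P u‖ < 1 ∧ P u ∉ CVs := by
      intro u
      have hmem : P u ∈ range (P1.trans P2) := ⟨u, rfl⟩
      rw [Path.trans_range] at hmem
      rcases hmem with hmem | hmem
      · obtain ⟨v, hv⟩ := hmem
        have hv' : ((lam r (v:ℝ) y : ℝ):ℂ) * y = P u := hv
        constructor
        · rw [← hv', abs_lam_smul (lam_pos hr0 hr1 v.2 y).le]
          have h1 : lam r (v:ℝ) y ≤ 1 := lam_le_one hr0 hr1 v.2 y
          have h2 : 0 < lam r (v:ℝ) y := lam_pos hr0 hr1 v.2 y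
          nlinarith [norm_nonneg y]
        · rw [← hv']
          exact lam_smul_avoid hr0 hr1 hrCV v.2 hyCV
      · obtain ⟨v, hv⟩ := hmem
        have hv' : Φ (α' v) = P u := hv
        constructor
        · rw [← hv', hΦ]
          exact abs_cc_smul_lt_one hr0 hr1 (α' v)
        · rw [← hv', hΦlam]
          exact lam_smul_avoid hr0 hr1 hrCV hmem1 (hα' v)
    have hPext : ∀ t ∈ Icc (0:ℝ) 1, ‖P.extend t‖ < 1 ∧ P.extend t ∉ CVs := by
      intro t ht
      rw [Path.extend_apply P ht]
      exact hPrange _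
    obtain ⟨M, hMc, hM0, hMe⟩ := path_lift p hdeg P.continuous_extend.continuousOn
      (fun t ht zz hzz => hAvoid _ (hPext t ht).2 zz hzz)
      (z₀ := z') (by rw [Path.extend_zero])
    have hMD : ∀ t ∈ Icc (0:ℝ) 1, M t ∈ Dp := by
      intro t ht
      rw [hDp, mem_setOf_eq, hMe t ht]
      exact (hPext t ht).1
    have hM1 : M 1 ∈ Fa := by
      rw [hFa, mem_setOf_eq, hMe 1 hmem1, Path.extend_one]
    refine ⟨M 1, hM1, hjoin1.trans ?_⟩
    exact joinedIn_of_fun hMc hMD hM0 rfl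
  refine IsPathConnected.isConnected ⟨w₀, hFaD hw₀, ?_⟩
  intro z hz
  obtain ⟨w, hwFa, hjoin⟩ := claimB z hz
  exact (claimA w₀ hw₀ w hwFa).trans hjoin.symm
end

section
/- Let B be a finite Blaschke product of degree n ≥ 2 such that B' has a zero of order n-1 at the origin (i.e., all critical points of B in D are at 0). Then the zeros of B are the n-th roots of a single complex number; in particular they are equally spaced on a circle centered at the origin. -/
open Complex

open Polynomial Asymptotics Filter Finset Topology

lemma reflect_prod_X_sub_C {ι : Type*} [DecidableEq ι] (s : Finset ι) (c : ι → ℂ) :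
    Polynomial.reflect s.card (∏ j ∈ s, (X - C (c j))) = ∏ j ∈ s, (1 - C (c j) * X) := by
  induction s using Finset.induction_on with
  | empty => simp [Polynomial.reflect_one]
  | insert a s h ih =>
    rw [Finset.prod_insert h, Finset.prod_insert h, Finset.card_insert_of_notMem h,
      show s.card + 1 = 1 + s.card by ring,
      Polynomial.reflect_mul _ _ (F := 1) (G := s.card) (by simp)
        (le_trans (Polynomial.natDegree_prod_le _ _)
          (by simp [Polynomial.natDegree_X_sub_C])), ih]
    congr 1
    have h1 : (X : ℂ[X]) - C (c a) = X + C (-(c a)) * 1 := by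
      rw [mul_one, map_neg, sub_eq_add_neg]
    rw [h1, Polynomial.reflect_add, Polynomial.reflect_C_mul, Polynomial.reflect_one_X,
      Polynomial.reflect_one, map_neg]
    ring

lemma poly_coeff_eq_zero_of_isBigO :
    ∀ (m : ℕ) (R : ℂ[X]), (fun z => R.eval z) =O[𝓝[≠] (0:ℂ)] (fun z => z ^ m) →
    ∀ k < m, R.coeff k = 0 := by
  intro m
  induction m with
  | zero => intro R _ k hk; omega
  | succ m ih =>
    intro R hR k hk
    have h0 : R.coeff 0 = 0 := by
      have t1 : Tendsto (fun z => R.eval z) (𝓝[≠] (0:ℂ)) (𝓝 0) := by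
        refine hR.trans_tendsto ?_
        have : Tendsto (fun z : ℂ => z ^ (m+1)) (𝓝 (0:ℂ)) (𝓝 ((0:ℂ) ^ (m+1))) :=
          (continuous_pow (m+1)).tendsto 0
        simpa using this.mono_left nhdsWithin_le_nhds
      have t2 : Tendsto (fun z => R.eval z) (𝓝[≠] (0:ℂ)) (𝓝 (R.eval 0)) :=
        (R.continuous_aeval.tendsto 0).mono_left nhdsWithin_le_nhds
      rw [Polynomial.coeff_zero_eq_eval_zero]
      exact tendsto_nhds_unique t2 t1
    rcases Nat.eq_zero_or_pos k with rfl | hkpos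
    · exact h0
    obtain ⟨k, rfl⟩ : ∃ k', k = k' + 1 := ⟨k - 1, by omega⟩
    rw [← Polynomial.coeff_divX]
    refine ih R.divX ?_ k (by omega)
    obtain ⟨C0, hC0⟩ := isBigO_iff.mp hR
    rw [isBigO_iff]
    refine ⟨C0, ?_⟩
    filter_upwards [hC0, self_mem_nhdsWithin] with z hz hz0
    have hz0' : (z:ℂ) ≠ 0 := hz0
    have hRz : R.eval z = z * (R.divX).eval z := by
      conv_lhs => rw [← Polynomial.X_mul_divX_add R]
      simp [h0]
    rw [hRz, norm_mul] at hz
    have hzp : (0:ℝ) < ‖z‖ := norm_pos_iff.mpr hz0'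
    rw [norm_pow] at hz ⊢
    calc ‖R.divX.eval z‖ = ‖z‖ * ‖R.divX.eval z‖ / ‖z‖ :=
          (mul_div_cancel_left₀ _ hzp.ne').symm
    _ ≤ C0 * ‖z‖ ^ (m+1) / ‖z‖ := by gcongr
    _ = C0 * ‖z‖ ^ m := by
        rw [pow_succ, mul_div_assoc, mul_div_cancel_right₀ _ hzp.ne']
open Complex

/-- Let `B` be a finite Blaschke product of degree `n ≥ 2` such that `B'`
has a zero of order `n-1` at the origin (i.e. all critical points of `B` in the disk are
at `0`). Then the zeros of `B` are the n-th roots of a single complex number; in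
particular they are equally spaced on a circle centered at the origin. -/
theorem stmt13 (n : ℕ) (hn : 2 ≤ n) (lam : ℂ) (hlam : ‖lam‖ = 1)
    (a : Fin n → ℂ) (ha : ∀ j, a j ∈ unitDisk)
    (B : ℂ → ℂ)
    (hB : ∀ z : ℂ, B z = lam * ∏ j, (z - a j) / (1 - (starRingEnd ℂ) (a j) * z))
    (hcrit : ∀ k : ℕ, 1 ≤ k → k ≤ n - 1 → iteratedDeriv k B 0 = 0) :
    ∃ w : ℂ, ∀ z ∈ unitDisk, (B z = 0 ↔ z ^ n = w) := by
  have ha' : ∀ j, ‖a j‖ < 1 := ha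
  set P : Polynomial ℂ := ∏ j, (X - C (a j)) with hPdef
  set Q : Polynomial ℂ := ∏ j, (1 - C ((starRingEnd ℂ) (a j)) * X) with hQdef
  have hPev : ∀ z : ℂ, P.eval z = ∏ j, (z - a j) := by
    intro z; simp [hPdef, Polynomial.eval_prod]
  have hQev : ∀ z : ℂ, Q.eval z = ∏ j, (1 - (starRingEnd ℂ) (a j) * z) := by
    intro z; simp [hQdef, Polynomial.eval_prod]
  have hQne : ∀ z : ℂ, ‖z‖ < 1 → Q.eval z ≠ 0 := by
    intro z hz
    rw [hQev]
    refine Finset.prod_ne_zero_iff.mpr fun j _ => ?_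
    intro h
    have h1 : (1 : ℂ) = (starRingEnd ℂ) (a j) * z := sub_eq_zero.mp h
    have h2 : ‖(starRingEnd ℂ) (a j)‖ * ‖z‖ = 1 := by
      rw [← norm_mul, ← h1]; simp
    rw [Complex.norm_conj] at h2
    nlinarith [norm_nonneg z, norm_nonneg (a j), ha' j, hz]
  have hBfor : ∀ z : ℂ, ‖z‖ < 1 → B z = lam * P.eval z / Q.eval z := by
    intro z hz
    rw [hB z, Finset.prod_div_distrib, ← hPev, ← hQev, mul_div_assoc]
  have hlam0 : lam ≠ 0 := by
    intro h; rw [h] at hlam; simp at hlam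
  -- analyticity of B at 0
  have hdiff : DifferentiableOn ℂ B (Metric.closedBall (0 : ℂ) (1/2)) := by
    have hg : DifferentiableOn ℂ (fun z => lam * P.eval z / Q.eval z)
        (Metric.closedBall (0 : ℂ) (1/2)) := by
      refine DifferentiableOn.div ?_ ?_ ?_
      · exact ((differentiable_const lam).mul (Polynomial.differentiable P)).differentiableOn
      · exact (Polynomial.differentiable Q).differentiableOn
      · intro x hx
        refine hQne x ?_
        have : ‖x‖ ≤ 1/2 := by
          simpa [Complex.dist_eq] using Metric.mem_closedBall.mp hx
        linarith
    refine hg.congr fun x hx => ?_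
    refine hBfor x ?_
    have : ‖x‖ ≤ 1/2 := by
      simpa [Complex.dist_eq] using Metric.mem_closedBall.mp hx
    linarith
  have hA : AnalyticAt ℂ B 0 :=
    hdiff.analyticAt (Metric.closedBall_mem_nhds 0 (by norm_num))
  obtain ⟨p, hpat⟩ := hA
  obtain ⟨r, hball⟩ := id hpat
  -- coefficients of p vanish in degrees 1..n-1
  have hcoeff : ∀ k : ℕ, 1 ≤ k → k ≤ n - 1 → p.coeff k = 0 := by
    intro k h1 h2
    have hfs := hball.factorial_smul (1 : ℂ) k
    rw [← iteratedDeriv_eq_iteratedFDeriv, hcrit k h1 h2] at hfs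
    have h3 : (Nat.factorial k : ℂ) * p k (fun _ => (1 : ℂ)) = 0 := by
      rw [← nsmul_eq_mul]; exact hfs
    have hk0 : (Nat.factorial k : ℂ) ≠ 0 := by exact_mod_cast Nat.factorial_ne_zero k
    exact (mul_eq_zero.mp h3).resolve_left hk0
  have hcoeff0 : p.coeff 0 = B 0 := hpat.coeff_zero _
  have hps : ∀ y : ℂ, p.partialSum n y = B 0 := by
    intro y
    rw [FormalMultilinearSeries.partialSum]
    have h4 : ∀ k ∈ Finset.range n, (p k fun _ => y) = if k = 0 then B 0 else 0 := by
      intro k hk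
      rw [FormalMultilinearSeries.apply_eq_pow_smul_coeff]
      rcases Nat.eq_zero_or_pos k with rfl | hkpos
      · simp [hcoeff0]
      · rw [hcoeff k hkpos (by have := Finset.mem_range.mp hk; omega)]
        simp [if_neg hkpos.ne']
    rw [Finset.sum_congr rfl h4, Finset.sum_ite_eq' (Finset.range n) 0 (fun _ => B 0),
      if_pos (Finset.mem_range.mpr (by omega))]
  have hO : (fun y : ℂ => B y - B 0) =O[𝓝 (0 : ℂ)] fun y => ‖y‖ ^ n := by
    have h1 := hpat.isBigO_sub_partialSum_pow n
    have h2 : (fun y : ℂ => B (0 + y) - p.partialSum n y) = fun y => B y - B 0 := by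
      funext y; rw [zero_add, hps y]
    rwa [h2] at h1
  have hO' : (fun y : ℂ => B y - B 0) =O[𝓝 (0 : ℂ)] fun y : ℂ => y ^ n := by
    have h1 : (fun y : ℂ => ‖y‖ ^ n) = fun y : ℂ => ‖y ^ n‖ := by
      funext y; rw [norm_pow]
    rw [h1] at hO
    exact hO.of_norm_right
  set R : Polynomial ℂ := Polynomial.C lam * P - Polynomial.C (B 0) * Q with hRdef
  have hRev : ∀ z : ℂ, ‖z‖ < 1 → R.eval z = Q.eval z * (B z - B 0) := by
    intro z hz
    have hq := hQne z hz
    rw [hBfor z hz, hRdef]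
    field_simp
    simp only [Polynomial.eval_sub, Polynomial.eval_mul, Polynomial.eval_C]
    ring
  have hRO : (fun z : ℂ => R.eval z) =O[𝓝[≠] (0 : ℂ)] fun z => z ^ n := by
    have hQ1 : (fun z : ℂ => Q.eval z) =O[𝓝 (0 : ℂ)] (fun _ => (1 : ℂ)) :=
      (Q.continuous.tendsto 0).isBigO_one ℂ
    have h3 := hQ1.mul hO'
    have h4 : (fun z : ℂ => Q.eval z * (B z - B 0)) =O[𝓝[≠] (0 : ℂ)] fun z => z ^ n := by
      simpa using h3.mono nhdsWithin_le_nhds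
    have hev : ∀ᶠ z : ℂ in 𝓝[≠] (0 : ℂ), ‖z‖ < 1 := by
      refine Filter.Eventually.filter_mono nhdsWithin_le_nhds ?_
      filter_upwards [Metric.ball_mem_nhds (0 : ℂ) one_pos] with z hz
      simpa [Complex.dist_eq] using hz
    refine Filter.EventuallyEq.trans_isBigO ?_ h4
    filter_upwards [hev] with z hz
    exact hRev z hz
  have hRcoeff := poly_coeff_eq_zero_of_isBigO n R hRO
  have hB0 : B 0 = lam * P.coeff 0 := by
    rw [hBfor 0 (by simp), Polynomial.coeff_zero_eq_eval_zero]
    have : Q.eval 0 = 1 := by rw [hQev]; simp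
    rw [this, div_one]
  have hrel : ∀ k : ℕ, 1 ≤ k → k ≤ n - 1 → P.coeff k = P.coeff 0 * Q.coeff k := by
    intro k h1 h2
    have h3 := hRcoeff k (by omega)
    rw [hRdef] at h3
    simp only [Polynomial.coeff_sub, Polynomial.coeff_C_mul] at h3
    rw [hB0] at h3
    have h4 : lam * P.coeff k = lam * (P.coeff 0 * Q.coeff k) := by
      have := sub_eq_zero.mp h3
      rw [this]; ring
    exact mul_left_cancel₀ hlam0 h4
  have hQP : ∀ k : ℕ, k ≤ n → Q.coeff k = (starRingEnd ℂ) (P.coeff (n - k)) := by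
    have hQr : Q = Polynomial.reflect n (P.map (starRingEnd ℂ)) := by
      rw [hPdef, Polynomial.map_prod]
      have h5 := reflect_prod_X_sub_C (Finset.univ : Finset (Fin n))
        (fun j => (starRingEnd ℂ) (a j))
      simp only [Finset.card_univ, Fintype.card_fin] at h5
      rw [hQdef, ← h5]
      congr 1
      refine Finset.prod_congr rfl fun j _ => ?_
      simp
    intro k hk
    rw [hQr, Polynomial.coeff_reflect, Polynomial.revAt_le hk, Polynomial.coeff_map]
  have hPm : P.Monic := Polynomial.monic_prod_of_monic _ _ fun j _ => Polynomial.monic_X_sub_C _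
  have hPdeg : P.natDegree = n := by
    rw [hPdef, Polynomial.natDegree_prod_of_monic _ _ fun j _ => Polynomial.monic_X_sub_C _]
    simp [Polynomial.natDegree_X_sub_C]
  have habs0 : ‖P.coeff 0‖ < 1 := by
    have h6 : P.coeff 0 = ∏ j, (-(a j)) := by
      rw [Polynomial.coeff_zero_eq_eval_zero, hPev]
      exact Finset.prod_congr rfl fun j _ => by ring
    rw [h6, norm_prod]
    have h7 : ∀ j : Fin n, ‖-(a j)‖ = ‖a j‖ := fun j => by simp
    rw [Finset.prod_congr rfl fun j _ => h7 j]
    set j0 : Fin n := ⟨0, by omega⟩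
    rw [← Finset.mul_prod_erase Finset.univ _ (Finset.mem_univ j0)]
    have hle : ∏ j ∈ Finset.univ.erase j0, ‖a j‖ ≤ 1 :=
      Finset.prod_le_one (fun i _ => norm_nonneg _) (fun i _ => (ha' i).le)
    have hnn : (0:ℝ) ≤ ∏ j ∈ Finset.univ.erase j0, ‖a j‖ :=
      Finset.prod_nonneg fun i _ => norm_nonneg _
    nlinarith [norm_nonneg (a j0), ha' j0]
  have key : ∀ k : ℕ, 1 ≤ k → k ≤ n - 1 → P.coeff k = 0 := by
    intro k h1 h2
    have e1 : P.coeff k = P.coeff 0 * (starRingEnd ℂ) (P.coeff (n - k)) := by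
      rw [hrel k h1 h2, hQP k (by omega)]
    have e2 : P.coeff (n - k) = P.coeff 0 * (starRingEnd ℂ) (P.coeff k) := by
      have hk' : n - (n - k) = k := by omega
      rw [hrel (n - k) (by omega) (by omega), hQP (n - k) (by omega), hk']
    rw [e2, map_mul, RingHomCompTriple.comp_apply] at e1
    simp only [RingHom.id_apply] at e1
    have e3 : (1 - P.coeff 0 * (starRingEnd ℂ) (P.coeff 0)) * P.coeff k = 0 := by
      linear_combination e1
    have hne : (1 - P.coeff 0 * (starRingEnd ℂ) (P.coeff 0)) ≠ 0 := by
      rw [Complex.mul_conj]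
      intro h
      have h8 := sub_eq_zero.mp h
      have h9 : Complex.normSq (P.coeff 0) < 1 := by
        rw [Complex.normSq_eq_norm_sq]
        nlinarith [norm_nonneg (P.coeff 0)]
      rw [← Complex.ofReal_one] at h8
      have := Complex.ofReal_inj.mp h8
      linarith
    exact (mul_eq_zero.mp e3).resolve_left hne
  have hPcn : P.coeff n = 1 := by
    have := hPm.coeff_natDegree
    rwa [hPdeg] at this
  have heval : ∀ z : ℂ, P.eval z = z ^ n + P.coeff 0 := by
    intro z
    rw [Polynomial.eval_eq_sum_range, hPdeg, Finset.sum_range_succ, hPcn]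
    have hmid : ∑ i ∈ Finset.range n, P.coeff i * z ^ i = P.coeff 0 := by
      have hn' : n = (n - 1) + 1 := by omega
      rw [hn', Finset.sum_range_succ']
      have h10 : ∀ i ∈ Finset.range (n - 1), P.coeff (i + 1) * z ^ (i + 1) = 0 := by
        intro i hi
        have hi' := Finset.mem_range.mp hi
        rw [key (i + 1) (by omega) (by omega)]
        ring
      rw [Finset.sum_congr rfl h10]
      simp
    rw [hmid]
    ring
  refine ⟨-(P.coeff 0), fun z hz => ?_⟩
  have hz' : ‖z‖ < 1 := hz
  rw [hBfor z hz', heval z, _root_.div_eq_zero_iff, or_iff_left (hQne z hz'), mul_eq_zero,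
    or_iff_right hlam0, _root_.add_eq_zero_iff_eq_neg]
end

section
/- Let B be a finite Blaschke product with B(z) = λ (z^n - c^n)/(1 - \bar{c}^n z^n), |λ| = 1, c ∈ D, n ≥ 2. Then the polynomial p(z) = λ(|c|^{2n} - 1) z^n - λ c^n, restricted to E = φ(D) where φ(z) = e^{iπ/n} z (1 - \bar{c}^n z^n)^{-1/n}, is a conformal model for B on D: φ is an injective holomorphic map from D onto E and B = p ∘ φ on D. -/
open Complex

lemma unitDisk_eq_ball : unitDisk = Metric.ball (0:ℂ) 1 := by
  ext z; simp [unitDisk, Metric.mem_ball, Complex.dist_eq]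

lemma disk_open : IsOpen unitDisk := by
  rw [unitDisk_eq_ball]; exact Metric.isOpen_ball

lemma disk_convex : Convex ℝ unitDisk := by
  rw [unitDisk_eq_ball]; exact convex_ball 0 1

lemma zero_mem_disk : (0:ℂ) ∈ unitDisk := by simp [unitDisk]

lemma denom_ne {n : ℕ} (hn : n ≠ 0) {c z : ℂ} (hc : c ∈ unitDisk) (hz : z ∈ unitDisk) :
    1 - (starRingEnd ℂ) c ^ n * z ^ n ≠ 0 := by
  intro h
  have h1 : (starRingEnd ℂ) c ^ n * z ^ n = 1 := by linear_combination -h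
  have h2 : ‖(starRingEnd ℂ) c ^ n * z ^ n‖ < 1 := by
    rw [norm_mul, norm_pow, norm_pow, Complex.norm_conj]
    have hc' : ‖c‖ < 1 := hc
    have hz' : ‖z‖ < 1 := hz
    calc ‖c‖ ^ n * ‖z‖ ^ n
        = (‖c‖ * ‖z‖) ^ n := (mul_pow _ _ _).symm
      _ < 1 := by
          apply pow_lt_one₀ (mul_nonneg (norm_nonneg _) (norm_nonneg _)) _ hn
          nlinarith [norm_nonneg c, norm_nonneg z]
  rw [h1] at h2; simp at h2

lemma real_pow_eq_one {a : ℝ} (ha : 0 ≤ a) {n : ℕ} (hn : n ≠ 0) (h : a ^ n = 1) :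
    a = 1 := by
  rcases lt_trichotomy a 1 with h1 | h1 | h1
  · have := pow_lt_one₀ ha h1 hn
    linarith
  · exact h1
  · have := one_lt_pow₀ h1 hn
    linarith

lemma const_of_pow_eq_one {u : ℂ → ℂ} {n : ℕ} (hn : n ≠ 0)
    (hu : DifferentiableOn ℂ u unitDisk)
    (h : ∀ z ∈ unitDisk, u z ^ n = 1) {z : ℂ} (hz : z ∈ unitDisk) :
    u z = u 0 := by
  apply disk_convex.is_const_of_fderivWithin_eq_zero hu _ hz zero_mem_disk
  intro x hx
  have hux : u x ≠ 0 := by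
    intro h0
    have := h x hx
    rw [h0, zero_pow hn] at this
    exact zero_ne_one this
  have hdiff : DifferentiableAt ℂ u x := hu.differentiableAt (disk_open.mem_nhds hx)
  have hd : HasDerivAt u (deriv u x) x := hdiff.hasDerivAt
  have h1 : HasDerivAt (fun y => u y ^ n) ((n : ℂ) * u x ^ (n - 1) * deriv u x) x := hd.pow n
  have h2 : HasDerivAt (fun y => u y ^ n) 0 x := by
    have hev : (fun y => u y ^ n) =ᶠ[nhds x] fun _ => (1 : ℂ) := by
      filter_upwards [disk_open.mem_nhds hx] with y hy using h y hy
    exact (hasDerivAt_const x (1 : ℂ)).congr_of_eventuallyEq hev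
  have h3 : (n : ℂ) * u x ^ (n - 1) * deriv u x = 0 := h1.unique h2
  have hderiv : deriv u x = 0 := by
    have hn' : (n : ℂ) ≠ 0 := Nat.cast_ne_zero.mpr hn
    have hp : u x ^ (n - 1) ≠ 0 := pow_ne_zero _ hux
    rcases mul_eq_zero.mp h3 with h4 | h4
    · exact absurd h4 (mul_ne_zero hn' hp)
    · exact h4
  have hF : HasDerivAt u 0 x := hderiv ▸ hd
  rw [fderivWithin_of_isOpen disk_open hx]
  have h0 : (ContinuousLinearMap.smulRight (1 : ℂ →L[ℂ] ℂ) (0 : ℂ)) = 0 := by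
    ext1; simp
  have : HasFDerivAt u (0 : ℂ →L[ℂ] ℂ) x := h0 ▸ hF.hasFDerivAt
  exact this.fderiv

/-- Let `B(z) = λ(z^n - c^n)/(1 - conj c ^ n z^n)` with `|λ| = 1`,
`c` in the disk, `n ≥ 2`. Then the polynomial `p(z) = λ(|c|^{2n}-1)z^n - λ c^n`,
restricted to `E = φ(D)` where `φ(z) = e^{iπ/n} z / ρ(z)` (with `ρ` a holomorphic
branch on the disk of the n-th root of `1 - conj c ^ n z^n`, equal to `1` at `0`),
is a conformal model for `B` on the disk: `φ` is an injective holomorphic map of the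
disk onto `E` and `B = p ∘ φ` on the disk. -/
theorem stmt14 (n : ℕ) (hn : 2 ≤ n) (lam c : ℂ) (hlam : ‖lam‖ = 1)
    (hc : c ∈ unitDisk)
    (ρ : ℂ → ℂ) (hρdiff : DifferentiableOn ℂ ρ unitDisk)
    (hρpow : ∀ z ∈ unitDisk, ρ z ^ n = 1 - (starRingEnd ℂ) c ^ n * z ^ n)
    (hρ0 : ρ 0 = 1)
    (B φ p : ℂ → ℂ)
    (hB : ∀ z : ℂ, B z = lam * (z ^ n - c ^ n) / (1 - (starRingEnd ℂ) c ^ n * z ^ n))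
    (hφ : ∀ z : ℂ, φ z = Complex.exp (↑Real.pi * Complex.I / n) * z / ρ z)
    (hp : ∀ z : ℂ, p z = lam * ((‖c‖ : ℂ) ^ (2 * n) - 1) * z ^ n - lam * c ^ n) :
    DifferentiableOn ℂ φ unitDisk ∧ Set.InjOn φ unitDisk ∧
      Set.BijOn φ unitDisk (φ '' unitDisk) ∧
      ∀ z ∈ unitDisk, B z = p (φ z) := by
  have hn0 : n ≠ 0 := by omega
  have hρne : ∀ z ∈ unitDisk, ρ z ≠ 0 := by
    intro z hz h0
    have := hρpow z hz
    rw [h0, zero_pow hn0] at this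
    exact denom_ne hn0 hc hz this.symm
  have hφeq : φ = fun z => Complex.exp (↑Real.pi * Complex.I / n) * z / ρ z :=
    funext hφ
  have hdiff : DifferentiableOn ℂ φ unitDisk := by
    rw [hφeq]
    exact DifferentiableOn.div
      ((differentiable_const _).mul differentiable_id).differentiableOn hρdiff hρne
  -- key power identity
  have hnC : (n : ℂ) ≠ 0 := Nat.cast_ne_zero.mpr hn0
  have hen : Complex.exp (↑Real.pi * Complex.I / n) ^ n = -1 := by
    rw [← Complex.exp_nat_mul]
    have h1 : (n : ℂ) * (↑Real.pi * Complex.I / n) = ↑Real.pi * Complex.I := by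
      rw [mul_div_assoc']
      exact mul_div_cancel_left₀ _ hnC
    rw [h1, Complex.exp_pi_mul_I]
  have hφpow : ∀ z ∈ unitDisk,
      φ z ^ n = -(z ^ n) / (1 - (starRingEnd ℂ) c ^ n * z ^ n) := by
    intro z hz
    rw [hφ, div_pow, mul_pow, hρpow z hz, hen]
    ring_nf
  have hinj : Set.InjOn φ unitDisk := by
    intro z hz w hw hzw
    have hρz := hρne z hz
    have hρw := hρne w hw
    have he : Complex.exp (↑Real.pi * Complex.I / n) ≠ 0 := Complex.exp_ne_zero _
    have hdz := denom_ne hn0 hc hz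
    have hdw := denom_ne hn0 hc hw
    have hpow : z ^ n = w ^ n := by
      have heq : -(z ^ n) / (1 - (starRingEnd ℂ) c ^ n * z ^ n)
          = -(w ^ n) / (1 - (starRingEnd ℂ) c ^ n * w ^ n) := by
        rw [← hφpow z hz, ← hφpow w hw, hzw]
      rw [div_eq_div_iff hdz hdw] at heq
      linear_combination -heq
    by_cases hz0 : z = 0
    · subst hz0
      have : w ^ n = 0 := by rw [← hpow, zero_pow hn0]
      rw [pow_eq_zero_iff hn0] at this
      rw [this]
    · have hw0 : w ≠ 0 := by
        intro h0
        rw [h0, zero_pow hn0, pow_eq_zero_iff hn0] at hpow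
        exact hz0 hpow
      set ω := w / z with hωdef
      have hω : ω ^ n = 1 := by
        rw [hωdef, div_pow, ← hpow, div_self (pow_ne_zero _ hz0)]
      have hωabs : ‖ω‖ = 1 := by
        apply real_pow_eq_one (norm_nonneg _) hn0
        rw [← norm_pow, hω, norm_one]
      have hzw' : z * ρ w = w * ρ z := by
        have h1 := hzw
        rw [hφ z, hφ w, div_eq_div_iff hρz hρw] at h1
        apply mul_left_cancel₀ he
        linear_combination h1
      have hρweq : ρ w = ω * ρ z := by
        rw [hωdef, div_mul_eq_mul_div, eq_div_iff hz0]
        linear_combination hzw'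
      have humem : ∀ t ∈ unitDisk, ω * t ∈ unitDisk := by
        intro t ht
        have ht' : ‖t‖ < 1 := ht
        show ‖ω * t‖ < 1
        rw [norm_mul, hωabs, one_mul]
        exact ht'
      have hudiff : DifferentiableOn ℂ (fun t => ρ (ω * t) / ρ t) unitDisk := by
        apply DifferentiableOn.div _ hρdiff hρne
        exact hρdiff.comp ((differentiable_id.const_mul ω).differentiableOn) humem
      have hupow : ∀ t ∈ unitDisk, (ρ (ω * t) / ρ t) ^ n = 1 := by
        intro t ht
        rw [div_pow, hρpow _ (humem t ht), hρpow t ht, mul_pow, hω, one_mul,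
          div_self (denom_ne hn0 hc ht)]
      have hconst := const_of_pow_eq_one hn0 hudiff hupow hz
      have hu0 : ρ (ω * 0) / ρ 0 = 1 := by
        rw [mul_zero, hρ0]
        norm_num
      have huz : ρ (ω * z) / ρ z = ω := by
        have : ω * z = w := by rw [hωdef]; field_simp
        rw [this, hρweq, mul_div_assoc, div_self hρz, mul_one]
      have hω1 : ω = 1 := by
        rw [← huz, hconst, hu0]
      rw [hωdef] at hω1
      field_simp at hω1
      exact hω1.symm
  refine ⟨hdiff, hinj, hinj.bijOn_image, ?_⟩
  intro z hz
  have hd := denom_ne hn0 hc hz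
  have habs : ((‖c‖ : ℂ)) ^ (2 * n) = c ^ n * (starRingEnd ℂ) c ^ n := by
    have h2 : ((‖c‖ : ℂ)) ^ 2 = c * (starRingEnd ℂ) c := by
      rw [← Complex.ofReal_pow, Complex.sq_norm]
      exact (Complex.mul_conj c).symm
    calc ((‖c‖ : ℂ)) ^ (2 * n) = (((‖c‖ : ℂ)) ^ 2) ^ n := by
          rw [← pow_mul]
      _ = (c * (starRingEnd ℂ) c) ^ n := by rw [h2]
      _ = c ^ n * (starRingEnd ℂ) c ^ n := mul_pow _ _ _
  have hd' : 1 - z ^ n * (starRingEnd ℂ) c ^ n ≠ 0 := by rw [mul_comm]; exact hd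
  rw [hB, hp, hφpow z hz, habs]
  field_simp
  ring
end
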